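/- arXiv:0902.4395 — 10 statements merged into one kernel-verified Lean document; each statement's English description precedes it below -/
import Mathlib

section
/- For all smooth 2π-periodic functions u, v, w : ℝ → ℝ, one has ∫₀^{2π} (2(u·v)″ − 2u′v′)·w dx = ∫₀^{2π} (2(u·w)″ − 2u′w′)·v dx. In other words, the Fréchet derivative (linearization in u) of ξ[u] := 2(u u_x)_x − u_x² is a symmetric (self-adjoint) operator with respect to the L² inner product on 2π-periodic functions, which is the Volterra criterion showing that the equation u_{xt} = 2(u u_x)_x − u_x² is Lagrangian. -/
open Real intervalIntegral

private lemma deriv2_mul_pt (u v : ℝ → ℝ)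
    (hu : ContDiff ℝ (⊤ : ℕ∞) u) (hv : ContDiff ℝ (⊤ : ℕ∞) v) (x : ℝ) :
    deriv (deriv (fun y => u y * v y)) x
      = deriv (deriv u) x * v x + 2 * deriv u x * deriv v x + u x * deriv (deriv v) x := by
  have hu' : ContDiff ℝ (⊤ : ℕ∞) (deriv u) := (contDiff_infty_iff_deriv.mp hu).2
  have hv' : ContDiff ℝ (⊤ : ℕ∞) (deriv v) := (contDiff_infty_iff_deriv.mp hv).2
  have h1 : deriv (fun y => u y * v y) = fun y => deriv u y * v y + u y * deriv v y := by
    funext y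
    exact deriv_mul (hu.differentiable (by simp) y) (hv.differentiable (by simp) y)
  rw [h1]
  have h2 : HasDerivAt (fun y => deriv u y * v y + u y * deriv v y)
      ((deriv (deriv u) x * v x + deriv u x * deriv v x)
        + (deriv u x * deriv v x + u x * deriv (deriv v) x)) x := by
    exact (((hu'.differentiable (by simp) x).hasDerivAt.mul
          (hv.differentiable (by simp) x).hasDerivAt).add
        ((hu.differentiable (by simp) x).hasDerivAt.mul
          (hv'.differentiable (by simp) x).hasDerivAt))
  rw [h2.deriv]; ring

/-- For all smooth `2π`-periodic functions `u, v, w : ℝ → ℝ`,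
`∫₀^{2π} (2(u·v)″ − 2u′v′)·w dx = ∫₀^{2π} (2(u·w)″ − 2u′w′)·v dx`; i.e. the
Fréchet derivative of `ξ[u] := 2(u u_x)_x − u_x²` is symmetric with respect to
the `L²` inner product on `2π`-periodic functions (Volterra criterion). -/
theorem whitham_linearization_symmetric
    (u v w : ℝ → ℝ)
    (hu : ContDiff ℝ (⊤ : ℕ∞) u) (hv : ContDiff ℝ (⊤ : ℕ∞) v)
    (hw : ContDiff ℝ (⊤ : ℕ∞) w)
    (hup : Function.Periodic u (2 * π)) (hvp : Function.Periodic v (2 * π))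
    (hwp : Function.Periodic w (2 * π)) :
    ∫ x in (0 : ℝ)..(2 * π),
        (2 * deriv (deriv (fun y => u y * v y)) x - 2 * deriv u x * deriv v x) * w x
      = ∫ x in (0 : ℝ)..(2 * π),
        (2 * deriv (deriv (fun y => u y * w y)) x - 2 * deriv u x * deriv w x) * v x := by
  have hu' : ContDiff ℝ (⊤ : ℕ∞) (deriv u) := (contDiff_infty_iff_deriv.mp hu).2
  have hv' : ContDiff ℝ (⊤ : ℕ∞) (deriv v) := (contDiff_infty_iff_deriv.mp hv).2
  have hw' : ContDiff ℝ (⊤ : ℕ∞) (deriv w) := (contDiff_infty_iff_deriv.mp hw).2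
  have hv'' : ContDiff ℝ (⊤ : ℕ∞) (deriv (deriv v)) := (contDiff_infty_iff_deriv.mp hv').2
  have hw'' : ContDiff ℝ (⊤ : ℕ∞) (deriv (deriv w)) := (contDiff_infty_iff_deriv.mp hw').2
  have hu'' : ContDiff ℝ (⊤ : ℕ∞) (deriv (deriv u)) := (contDiff_infty_iff_deriv.mp hu').2
  set F : ℝ → ℝ := fun x => 2 * (u x * deriv v x * w x - u x * deriv w x * v x) with hF_def
  -- derivative of F
  have hFd : ∀ x, HasDerivAt F
      (2 * ((deriv u x * deriv v x * w x + u x * deriv (deriv v) x * w x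
              + u x * deriv v x * deriv w x)
          - (deriv u x * deriv w x * v x + u x * deriv (deriv w) x * v x
              + u x * deriv w x * deriv v x))) x := by
    intro x
    have h1 : HasDerivAt (fun y => u y * deriv v y * w y)
        ((deriv u x * deriv v x + u x * deriv (deriv v) x) * w x
          + u x * deriv v x * deriv w x) x :=
      (((hu.differentiable (by simp) x).hasDerivAt.mul
          (hv'.differentiable (by simp) x).hasDerivAt).mul
        (hw.differentiable (by simp) x).hasDerivAt)
    have h2 : HasDerivAt (fun y => u y * deriv w y * v y)
        ((deriv u x * deriv w x + u x * deriv (deriv w) x) * v x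
          + u x * deriv w x * deriv v x) x :=
      (((hu.differentiable (by simp) x).hasDerivAt.mul
          (hw'.differentiable (by simp) x).hasDerivAt).mul
        (hv.differentiable (by simp) x).hasDerivAt)
    have := ((h1.sub h2).const_mul (2 : ℝ))
    convert this using 1
    all_goals first | rfl | ring
  -- pointwise identity
  have key : ∀ x,
      (2 * deriv (deriv (fun y => u y * v y)) x - 2 * deriv u x * deriv v x) * w x
        = (2 * deriv (deriv (fun y => u y * w y)) x - 2 * deriv u x * deriv w x) * v x
          + deriv F x := by
    intro x
    rw [deriv2_mul_pt u v hu hv x, deriv2_mul_pt u w hu hw x, (hFd x).deriv]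
    ring
  have hcont : Continuous (deriv F) := by
    have : deriv F = fun x => (2 * ((deriv u x * deriv v x * w x
        + u x * deriv (deriv v) x * w x + u x * deriv v x * deriv w x)
        - (deriv u x * deriv w x * v x + u x * deriv (deriv w) x * v x
        + u x * deriv w x * deriv v x))) := funext fun x => (hFd x).deriv
    rw [this]
    have cu := hu.continuous; have cu' := hu'.continuous
    have cv := hv.continuous; have cv' := hv'.continuous; have cv'' := hv''.continuous
    have cw := hw.continuous; have cw' := hw'.continuous; have cw'' := hw''.continuous
    fun_prop
  have hR : Continuous (fun x =>
      (2 * deriv (deriv (fun y => u y * w y)) x - 2 * deriv u x * deriv w x) * v x) := by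
    have : (fun x => (2 * deriv (deriv (fun y => u y * w y)) x
        - 2 * deriv u x * deriv w x) * v x)
        = fun x => (2 * (deriv (deriv u) x * w x + 2 * deriv u x * deriv w x
            + u x * deriv (deriv w) x) - 2 * deriv u x * deriv w x) * v x := by
      funext x; rw [deriv2_mul_pt u w hu hw x]
    rw [this]
    have cu := hu.continuous; have cu' := hu'.continuous; have cu'' := hu''.continuous
    have cv := hv.continuous
    have cw := hw.continuous; have cw' := hw'.continuous; have cw'' := hw''.continuous
    fun_prop
  have hint : (∫ x in (0:ℝ)..(2*π),
      (2 * deriv (deriv (fun y => u y * v y)) x - 2 * deriv u x * deriv v x) * w x)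
      = (∫ x in (0:ℝ)..(2*π),
        (2 * deriv (deriv (fun y => u y * w y)) x - 2 * deriv u x * deriv w x) * v x)
        + ∫ x in (0:ℝ)..(2*π), deriv F x := by
    rw [← intervalIntegral.integral_add (hR.intervalIntegrable _ _)
        (hcont.intervalIntegrable _ _)]
    exact intervalIntegral.integral_congr (fun x _ => key x)
  have hFper : F (2 * π) = F 0 := by
    have h1 : u (2 * π) = u 0 := by have := hup 0; simpa using this
    have h2 : v (2 * π) = v 0 := by have := hvp 0; simpa using this
    have h3 : w (2 * π) = w 0 := by have := hwp 0; simpa using this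
    have h4 : deriv v (2 * π) = deriv v 0 := by
      have he : (fun y => v (y + 2 * π)) = v := funext hvp
      have : deriv (fun y => v (y + 2 * π)) 0 = deriv v (0 + 2 * π) := deriv_comp_add_const v (2*π) 0
      rw [he] at this; rw [this]; norm_num
    have h5 : deriv w (2 * π) = deriv w 0 := by
      have he : (fun y => w (y + 2 * π)) = w := funext hwp
      have : deriv (fun y => w (y + 2 * π)) 0 = deriv w (0 + 2 * π) := deriv_comp_add_const w (2*π) 0
      rw [he] at this; rw [this]; norm_num
    simp only [hF_def, h1, h2, h3, h4, h5]
  have hzero : (∫ x in (0:ℝ)..(2*π), deriv F x) = 0 := by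
    rw [intervalIntegral.integral_deriv_eq_sub
        (fun x _ => (hFd x).differentiableAt) (hcont.intervalIntegrable _ _)]
    rw [hFper]; ring
  rw [hint, hzero, add_zero]
end

section
/- Define the operator ∂⁻¹ on continuous functions f : [0,2π] → ℝ by (∂⁻¹f)(x) := ½(∫₀^x f(s) ds − ∫_x^{2π} f(s) ds). Then for every continuous function w : [0,2π] → ℝ, the operator A f := ∂⁻¹(w·f) + w·(∂⁻¹f) is skew-adjoint with respect to the L² pairing: for all continuous f, g : [0,2π] → ℝ, ∫₀^{2π} (∂⁻¹(w f) + w·∂⁻¹f)·g dx = −∫₀^{2π} f·(∂⁻¹(w g) + w·∂⁻¹g) dx. With w = u_{xx} this is the skew-symmetry (co-implecticity) of the second structure operator η₋₁⁻¹ = ∂⁻¹u_{xx} + u_{xx}∂⁻¹ of the Whitham-type dynamical system. -/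
open Real intervalIntegral

/-- The inverse derivative operator
`(∂⁻¹f)(x) := ½(∫₀^x f(s) ds − ∫ₓ^{2π} f(s) ds)`. -/
noncomputable def invDeriv (f : ℝ → ℝ) : ℝ → ℝ :=
  fun x => (1 / 2) * ((∫ s in (0 : ℝ)..x, f s) - ∫ s in x..(2 * π), f s)

lemma invDeriv_eq (f : ℝ → ℝ) (hf : Continuous f) (x : ℝ) :
    invDeriv f x = (∫ s in (0:ℝ)..x, f s) - (∫ s in (0:ℝ)..(2*π), f s) / 2 := by
  have h : (∫ s in (0:ℝ)..x, f s) + (∫ s in x..(2*π), f s) = ∫ s in (0:ℝ)..(2*π), f s :=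
    intervalIntegral.integral_add_adjacent_intervals
      (hf.intervalIntegrable _ _) (hf.intervalIntegrable _ _)
  simp only [invDeriv]
  linarith

lemma invDeriv_continuous {h : ℝ → ℝ} (hh : Continuous h) : Continuous (invDeriv h) := by
  have he : invDeriv h = fun x => (∫ s in (0:ℝ)..x, h s) - (∫ s in (0:ℝ)..(2*π), h s) / 2 :=
    funext (invDeriv_eq h hh)
  rw [he]
  have : Differentiable ℝ fun y => ∫ s in (0:ℝ)..y, h s := fun x =>
    (intervalIntegral.integral_hasDerivAt_right (hh.intervalIntegrable _ _)
      (hh.stronglyMeasurableAtFilter _ _) hh.continuousAt).differentiableAt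
  exact this.continuous.sub continuous_const

lemma hasDerivAt_primitive (f : ℝ → ℝ) (hf : Continuous f) (x : ℝ) :
    HasDerivAt (fun y => ∫ s in (0:ℝ)..y, f s) (f x) x :=
  intervalIntegral.integral_hasDerivAt_right (hf.intervalIntegrable _ _)
    (hf.stronglyMeasurableAtFilter _ _) hf.continuousAt

/-- Key half of the skew-adjointness: `∫ ∂⁻¹(wf)·g = -∫ f·(w·∂⁻¹g)`. -/
lemma key (w f g : ℝ → ℝ) (hw : Continuous w) (hf : Continuous f) (hg : Continuous g) :
    ∫ x in (0:ℝ)..(2*π), invDeriv (fun s => w s * f s) x * g x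
      = - ∫ x in (0:ℝ)..(2*π), f x * (w x * invDeriv g x) := by
  set P : ℝ → ℝ := fun y => ∫ s in (0:ℝ)..y, w s * f s with hP
  set G : ℝ → ℝ := fun y => ∫ s in (0:ℝ)..y, g s with hG
  have hwf : Continuous fun s => w s * f s := hw.mul hf
  have hPd : ∀ x ∈ Set.uIcc (0:ℝ) (2*π), HasDerivAt P (w x * f x) x := fun x _ =>
    hasDerivAt_primitive _ hwf x
  have hGd : ∀ x ∈ Set.uIcc (0:ℝ) (2*π), HasDerivAt G (g x) x := fun x _ =>
    hasDerivAt_primitive _ hg x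
  have hPc : Continuous P := by
    have : Differentiable ℝ P := fun x => (hasDerivAt_primitive _ hwf x).differentiableAt
    exact this.continuous
  have hGc : Continuous G := by
    have : Differentiable ℝ G := fun x => (hasDerivAt_primitive _ hg x).differentiableAt
    exact this.continuous
  have ibp := intervalIntegral.integral_mul_deriv_eq_deriv_mul hPd hGd
    (hwf.intervalIntegrable 0 (2*π)) (hg.intervalIntegrable 0 (2*π))
  -- ibp : ∫ P x * g x = P (2π) * G (2π) - P 0 * G 0 - ∫ (w x * f x) * G x
  have hP0 : P 0 = 0 := intervalIntegral.integral_same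
  have hG0 : G 0 = 0 := intervalIntegral.integral_same
  have hL1 : (∫ x in (0:ℝ)..(2*π), invDeriv (fun s => w s * f s) x * g x)
      = (∫ x in (0:ℝ)..(2*π), P x * g x) - P (2*π) / 2 * G (2*π) := by
    have : ∀ x, invDeriv (fun s => w s * f s) x * g x
        = P x * g x - P (2*π) / 2 * g x := by
      intro x
      rw [invDeriv_eq _ hwf]
      ring
    rw [intervalIntegral.integral_congr (fun x _ => this x),
      intervalIntegral.integral_sub (f := fun x => P x * g x) (g := fun x => P (2*π) / 2 * g x) ((hPc.mul hg).intervalIntegrable _ _)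
        ((continuous_const.mul hg).intervalIntegrable _ _),
      intervalIntegral.integral_const_mul]
  have hR1 : (∫ x in (0:ℝ)..(2*π), f x * (w x * invDeriv g x))
      = (∫ x in (0:ℝ)..(2*π), (w x * f x) * G x) - G (2*π) / 2 * P (2*π) := by
    have : ∀ x, f x * (w x * invDeriv g x)
        = (w x * f x) * G x - G (2*π) / 2 * (w x * f x) := by
      intro x
      rw [invDeriv_eq _ hg]
      ring
    rw [intervalIntegral.integral_congr (fun x _ => this x),
      intervalIntegral.integral_sub (f := fun x => (w x * f x) * G x)
        (g := fun x => G (2*π) / 2 * (w x * f x)) ((hwf.mul hGc).intervalIntegrable _ _)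
        ((continuous_const.mul hwf).intervalIntegrable _ _),
      intervalIntegral.integral_const_mul]
  rw [hL1, hR1, ibp, hP0, hG0]
  ring

/-- Continuous extension of a function continuous on `[0, 2π]`. -/
noncomputable def iccExt (w : ℝ → ℝ) : ℝ → ℝ :=
  Set.IccExtend (by positivity : (0:ℝ) ≤ 2*π) ((Set.Icc (0:ℝ) (2*π)).restrict w)

lemma iccExt_continuous {w : ℝ → ℝ} (hw : ContinuousOn w (Set.Icc 0 (2*π))) :
    Continuous (iccExt w) :=
  (continuousOn_iff_continuous_restrict.mp hw).Icc_extend'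

lemma iccExt_eqOn (w : ℝ → ℝ) :
    Set.EqOn (iccExt w) w (Set.Icc 0 (2*π)) := fun x hx => by
  simp [iccExt, Set.IccExtend_of_mem _ _ hx]; rfl

lemma integral_invDeriv_congr {h h' : ℝ → ℝ}
    (hcongr : Set.EqOn h h' (Set.Icc 0 (2*π))) {x : ℝ} (hx : x ∈ Set.Icc 0 (2*π)) :
    invDeriv h x = invDeriv h' x := by
  have h1 : Set.uIcc (0:ℝ) x ⊆ Set.Icc 0 (2*π) := by
    rw [Set.uIcc_of_le hx.1]; exact Set.Icc_subset_Icc le_rfl hx.2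
  have h2 : Set.uIcc x (2*π) ⊆ Set.Icc 0 (2*π) := by
    rw [Set.uIcc_of_le hx.2]; exact Set.Icc_subset_Icc hx.1 le_rfl
  unfold invDeriv
  rw [intervalIntegral.integral_congr (hcongr.mono h1),
    intervalIntegral.integral_congr (hcongr.mono h2)]

/-- For every continuous `w : [0,2π] → ℝ`, the operator
`A f := ∂⁻¹(w·f) + w·(∂⁻¹f)` is skew-adjoint with respect to the `L²` pairing:
for all continuous `f, g : [0,2π] → ℝ`,
`∫₀^{2π} (∂⁻¹(wf) + w ∂⁻¹f)·g dx = −∫₀^{2π} f·(∂⁻¹(wg) + w ∂⁻¹g) dx`.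
With `w = u_{xx}` this is the skew-symmetry (co-implecticity) of the second
structure operator `η₋₁⁻¹ = ∂⁻¹u_{xx} + u_{xx}∂⁻¹`. -/
theorem secondStructure_skew_adjoint
    (w f g : ℝ → ℝ)
    (hw : ContinuousOn w (Set.Icc 0 (2 * π)))
    (hf : ContinuousOn f (Set.Icc 0 (2 * π)))
    (hg : ContinuousOn g (Set.Icc 0 (2 * π))) :
    ∫ x in (0 : ℝ)..(2 * π),
        (invDeriv (fun s => w s * f s) x + w x * invDeriv f x) * g x
      = - ∫ x in (0 : ℝ)..(2 * π),
        f x * (invDeriv (fun s => w s * g s) x + w x * invDeriv g x) := by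
  set W := iccExt w
  set F := iccExt f
  set Gn := iccExt g
  have hW : Continuous W := iccExt_continuous hw
  have hF : Continuous F := iccExt_continuous hf
  have hGn : Continuous Gn := iccExt_continuous hg
  have hmem : Set.uIcc (0:ℝ) (2*π) = Set.Icc 0 (2*π) :=
    Set.uIcc_of_le (by positivity)
  have hWe : Set.EqOn W w (Set.Icc 0 (2*π)) := iccExt_eqOn w
  have hFe : Set.EqOn F f (Set.Icc 0 (2*π)) := iccExt_eqOn f
  have hGe : Set.EqOn Gn g (Set.Icc 0 (2*π)) := iccExt_eqOn g
  have hWFe : Set.EqOn (fun s => W s * F s) (fun s => w s * f s) (Set.Icc 0 (2*π)) :=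
    fun x hx => by simp only [hWe hx, hFe hx]
  have hWGe : Set.EqOn (fun s => W s * Gn s) (fun s => w s * g s) (Set.Icc 0 (2*π)) :=
    fun x hx => by simp only [hWe hx, hGe hx]
  have hLHS : (∫ x in (0:ℝ)..(2*π),
        (invDeriv (fun s => w s * f s) x + w x * invDeriv f x) * g x)
      = ∫ x in (0:ℝ)..(2*π),
        (invDeriv (fun s => W s * F s) x + W x * invDeriv F x) * Gn x := by
    apply intervalIntegral.integral_congr
    intro x hx
    rw [hmem] at hx
    beta_reduce
    rw [integral_invDeriv_congr hWFe.symm hx, integral_invDeriv_congr hFe.symm hx,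
      hWe hx, hGe hx]
  have hRHS : (∫ x in (0:ℝ)..(2*π),
        f x * (invDeriv (fun s => w s * g s) x + w x * invDeriv g x))
      = ∫ x in (0:ℝ)..(2*π),
        F x * (invDeriv (fun s => W s * Gn s) x + W x * invDeriv Gn x) := by
    apply intervalIntegral.integral_congr
    intro x hx
    rw [hmem] at hx
    beta_reduce
    rw [integral_invDeriv_congr hWGe.symm hx, integral_invDeriv_congr hGe.symm hx,
      hWe hx, hFe hx]
  rw [hLHS, hRHS]
  have key1 := key W F Gn hW hF hGn
  have key2 := key W Gn F hW hGn hF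
  have hwfc : Continuous fun s => W s * F s := hW.mul hF
  have hwgc : Continuous fun s => W s * Gn s := hW.mul hGn
  have hid1 : Continuous (invDeriv F) := invDeriv_continuous hF
  have hid2 : Continuous (invDeriv Gn) := invDeriv_continuous hGn
  have hidwf : Continuous (invDeriv fun s => W s * F s) := invDeriv_continuous hwfc
  have hidwg : Continuous (invDeriv fun s => W s * Gn s) := invDeriv_continuous hwgc
  have eL : ∀ x, (invDeriv (fun s => W s * F s) x + W x * invDeriv F x) * Gn x
      = invDeriv (fun s => W s * F s) x * Gn x + Gn x * (W x * invDeriv F x) := by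
    intro x; ring
  have eR : ∀ x, F x * (invDeriv (fun s => W s * Gn s) x + W x * invDeriv Gn x)
      = invDeriv (fun s => W s * Gn s) x * F x + F x * (W x * invDeriv Gn x) := by
    intro x; ring
  rw [intervalIntegral.integral_congr (fun x _ => eL x),
    intervalIntegral.integral_congr (fun x _ => eR x),
    intervalIntegral.integral_add
      (f := fun x => invDeriv (fun s => W s * F s) x * Gn x) (g := fun x => Gn x * (W x * invDeriv F x))
      ((hidwf.mul hGn).intervalIntegrable _ _)
      ((hGn.mul (hW.mul hid1)).intervalIntegrable _ _),
    intervalIntegral.integral_add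
      (f := fun x => invDeriv (fun s => W s * Gn s) x * F x) (g := fun x => F x * (W x * invDeriv Gn x))
      ((hidwg.mul hF).intervalIntegrable _ _)
      ((hF.mul (hW.mul hid2)).intervalIntegrable _ _)]
  linarith [key1, key2]
end

section
/- Let u, v : ℝ × ℝ → ℝ be smooth functions of (x,t) satisfying u_t = 2u u_x − v and v_x = u_x² (the regularized hydrodynamic form of the Whitham-type equation). Then the pointwise local conservation law ∂_t(u·u_x²) = ∂_x(2u²u_x² − v²/2) holds everywhere; i.e., the density u u_x² of the Hamiltonian functional H_θ = ∫ u u_x² dx satisfies a continuity equation. -/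
open Real

private lemma whit_top_add_one : ((⊤ : ℕ∞) : WithTop ℕ∞) + 1 ≤ ((⊤ : ℕ∞) : WithTop ℕ∞) := by
  norm_num

private lemma whit_two_le : (2 : WithTop ℕ∞) ≤ ((⊤ : ℕ∞) : WithTop ℕ∞) :=
  le_trans (by norm_num) (WithTop.coe_le_coe.2 (le_top : (2:ℕ∞) ≤ ⊤))

private lemma whit_one_le : (1 : WithTop ℕ∞) ≤ ((⊤ : ℕ∞) : WithTop ℕ∞) :=
  le_trans (by norm_num) whit_two_le

private lemma whit_line_x {g : ℝ × ℝ → ℝ} (hg : Differentiable ℝ g) (x t : ℝ) :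
    HasDerivAt (fun x' => g (x', t)) (fderiv ℝ g (x, t) (1, 0)) x :=
  (hg (x, t)).hasFDerivAt.comp_hasDerivAt x ((hasDerivAt_id x).prodMk (hasDerivAt_const x t))

private lemma whit_line_t {g : ℝ × ℝ → ℝ} (hg : Differentiable ℝ g) (x t : ℝ) :
    HasDerivAt (fun t' => g (x, t')) (fderiv ℝ g (x, t) (0, 1)) t :=
  (hg (x, t)).hasFDerivAt.comp_hasDerivAt t ((hasDerivAt_const t x).prodMk (hasDerivAt_id t))

private lemma whit_contDiff_pd {g : ℝ × ℝ → ℝ} (hg : ContDiff ℝ (⊤ : ℕ∞) g) (v : ℝ × ℝ) :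
    ContDiff ℝ (⊤ : ℕ∞) (fun q => fderiv ℝ g q v) :=
  (hg.fderiv_right whit_top_add_one).clm_apply contDiff_const

private lemma whit_fderiv_ev {g : ℝ × ℝ → ℝ} (hg : ContDiff ℝ (⊤ : ℕ∞) g) (v p w : ℝ × ℝ) :
    fderiv ℝ (fun q => fderiv ℝ g q v) p w = fderiv ℝ (fderiv ℝ g) p w v := by
  have h1 : DifferentiableAt ℝ (fderiv ℝ g) p :=
    ((hg.fderiv_right whit_top_add_one).differentiable (by simp)) p
  have h2 : HasFDerivAt (fun q => fderiv ℝ g q v)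
      ((ContinuousLinearMap.apply ℝ ℝ v).comp (fderiv ℝ (fderiv ℝ g) p)) p :=
    ((ContinuousLinearMap.apply ℝ ℝ v).hasFDerivAt).comp p h1.hasFDerivAt
  rw [h2.fderiv]; rfl

/-- If smooth `u(x,t)`, `v(x,t)` satisfy `u_t = 2u u_x − v` and
`v_x = u_x²` (the regularized hydrodynamic form of the Whitham-type equation),
then the pointwise local conservation law
`∂_t(u·u_x²) = ∂_x(2u²u_x² − v²/2)` holds everywhere: the density `u u_x²` of
the Hamiltonian functional `H_θ = ∫ u u_x² dx` satisfies a continuity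
equation. -/
theorem whitham_local_conservation_hamiltonian_density
    (u v : ℝ → ℝ → ℝ)
    (hu : ContDiff ℝ (⊤ : ℕ∞) (Function.uncurry u))
    (hv : ContDiff ℝ (⊤ : ℕ∞) (Function.uncurry v))
    (hut : ∀ x t,
      deriv (fun t' => u x t') t
        = 2 * u x t * deriv (fun x' => u x' t) x - v x t)
    (hvx : ∀ x t,
      deriv (fun x' => v x' t) x = (deriv (fun x' => u x' t) x) ^ 2) :
    ∀ x t,
      deriv (fun t' => u x t' * (deriv (fun x' => u x' t') x) ^ 2) t
        = deriv (fun x' =>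
            2 * (u x' t) ^ 2 * (deriv (fun y => u y t) x') ^ 2
              - (v x' t) ^ 2 / 2) x := by
  intro x t
  set F := Function.uncurry u with hF
  set G := Function.uncurry v with hG
  have hFd : Differentiable ℝ F := hu.differentiable (by simp)
  have hGd : Differentiable ℝ G := hv.differentiable (by simp)
  have hFxd : Differentiable ℝ (fun q => fderiv ℝ F q (1, 0)) :=
    (whit_contDiff_pd hu (1, 0)).differentiable (by simp)
  have hFtd : Differentiable ℝ (fun q => fderiv ℝ F q (0, 1)) :=
    (whit_contDiff_pd hu (0, 1)).differentiable (by simp)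
  -- first derivatives
  have eqx : ∀ x' t', deriv (fun y => u y t') x' = fderiv ℝ F (x', t') (1, 0) :=
    fun x' t' => (whit_line_x hFd x' t').deriv
  have eqt : ∀ x' t', deriv (fun t'' => u x' t'') t' = fderiv ℝ F (x', t') (0, 1) :=
    fun x' t' => (whit_line_t hFd x' t').deriv
  have eqvx : ∀ x' t', deriv (fun y => v y t') x' = fderiv ℝ G (x', t') (1, 0) :=
    fun x' t' => (whit_line_x hGd x' t').deriv
  -- abbreviations at the point (x, t)
  set A := fderiv ℝ F (x, t) (1, 0) with hA
  set T := fderiv ℝ F (x, t) (0, 1) with hT0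
  set Vx := fderiv ℝ G (x, t) (1, 0) with hVx0
  set B := fderiv ℝ (fderiv ℝ F) (x, t) (1, 0) (1, 0) with hB0
  set M := fderiv ℝ (fderiv ℝ F) (x, t) (0, 1) (1, 0) with hM0
  set M2 := fderiv ℝ (fderiv ℝ F) (x, t) (1, 0) (0, 1) with hM20
  -- second derivative facts
  have hFxt : HasDerivAt (fun t' => fderiv ℝ F (x, t') (1, 0)) M t := by
    have := whit_line_t hFxd x t
    rwa [whit_fderiv_ev hu (1, 0) (x, t) (0, 1)] at this
  have hFxx : HasDerivAt (fun x' => fderiv ℝ F (x', t) (1, 0)) B x := by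
    have := whit_line_x hFxd x t
    rwa [whit_fderiv_ev hu (1, 0) (x, t) (1, 0)] at this
  have hFtx : HasDerivAt (fun x' => fderiv ℝ F (x', t) (0, 1)) M2 x := by
    have := whit_line_x hFtd x t
    rwa [whit_fderiv_ev hu (0, 1) (x, t) (1, 0)] at this
  -- symmetry of mixed second derivatives
  have hsym : M = M2 :=
    (hu.contDiffAt.isSymmSndFDerivAt (by simpa using whit_two_le)) (0, 1) (1, 0)
  -- pointwise form of the equations at (x, t)
  have hT : T = 2 * u x t * A - v x t := by
    rw [hT0, ← eqt x t, hut x t, eqx x t]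
  have hVxA : Vx = A ^ 2 := by
    rw [hVx0, ← eqvx x t, hvx x t, eqx x t]
  -- differentiate the evolution equation in x to get M2
  have hEqfun : (fun x' => fderiv ℝ F (x', t) (0, 1))
      = (fun x' => 2 * u x' t * fderiv ℝ F (x', t) (1, 0) - v x' t) := by
    funext x'
    rw [← eqt x' t, hut x' t, eqx x' t]
  have hux : HasDerivAt (fun x' => u x' t) A x := whit_line_x hFd x t
  have hvx' : HasDerivAt (fun x' => v x' t) Vx x := whit_line_x hGd x t
  have hRHSx : HasDerivAt (fun x' => 2 * u x' t * fderiv ℝ F (x', t) (1, 0) - v x' t)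
      ((2 * A) * fderiv ℝ F (x, t) (1, 0) + (2 * u x t) * B - Vx) x :=
    ((hux.const_mul 2).mul hFxx).sub hvx'
  have hM2 : M2 = 2 * A * A + 2 * u x t * B - Vx := by
    have h := hEqfun ▸ hFtx
    simpa [← hA] using h.unique hRHSx
  have hM : M = A ^ 2 + 2 * u x t * B := by
    rw [hsym, hM2, hVxA]; ring
  -- compute the left-hand side
  have hLfun : (fun t' => u x t' * (deriv (fun x' => u x' t') x) ^ 2)
      = (fun t' => u x t' * (fderiv ℝ F (x, t') (1, 0)) ^ 2) := by
    funext t'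
    rw [eqx x t']
  have hut' : HasDerivAt (fun t' => u x t') T t := whit_line_t hFd x t
  have hL : HasDerivAt (fun t' => u x t' * (fderiv ℝ F (x, t') (1, 0)) ^ 2)
      (T * A ^ 2 + u x t * ((2 : ℕ) * A ^ 1 * M)) t :=
    hut'.mul (hFxt.pow 2)
  -- compute the right-hand side
  have hRfun : (fun x' => 2 * (u x' t) ^ 2 * (deriv (fun y => u y t) x') ^ 2
        - (v x' t) ^ 2 / 2)
      = (fun x' => 2 * (u x' t) ^ 2 * (fderiv ℝ F (x', t) (1, 0)) ^ 2
        - (v x' t) ^ 2 / 2) := by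
    funext x'
    rw [eqx x' t]
  have hR : HasDerivAt (fun x' => 2 * (u x' t) ^ 2 * (fderiv ℝ F (x', t) (1, 0)) ^ 2
        - (v x' t) ^ 2 / 2)
      ((2 * ((2 : ℕ) * u x t ^ 1 * A)) * A ^ 2
        + 2 * (u x t) ^ 2 * ((2 : ℕ) * A ^ 1 * B)
        - ((2 : ℕ) * v x t ^ 1 * Vx) / 2) x :=
    (((hux.pow 2).const_mul 2).mul (hFxx.pow 2)).sub ((hvx'.pow 2).div_const 2)
  rw [hLfun, hL.deriv, hRfun, hR.deriv, hT, hVxA, hM]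
  push_cast
  ring
end

section
/- Let u, v : ℝ × ℝ → ℝ be smooth functions of (x,t) satisfying u_t = 2u u_x − v and v_x = u_x². Then ∂_x(v_t − 2u v_x) = 0 identically; that is, the quantity v_t − 2u v_x is independent of x (a function of t alone). In particular, up to an x-independent function of time, the pair (u,v) satisfies the regularized hydrodynamic system u_t = 2u u_x − v, v_t = 2u v_x, which is equivalent to the Whitham-type equation u_t = 2u u_x − ∂⁻¹u_x². -/
open Real

private lemma wt_le (n : ℕ) : ((n : ℕ) : WithTop ℕ∞) ≤ ((⊤:ℕ∞) : WithTop ℕ∞) :=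
  ENat.natCast_le_of_coe_top_le_withTop le_rfl n

private lemma hasDerivAt_curry_fst (f : ℝ → ℝ → ℝ)
    (hf : ContDiff ℝ (⊤ : ℕ∞) (Function.uncurry f)) (x t : ℝ) :
    HasDerivAt (fun x' => f x' t) (fderiv ℝ (Function.uncurry f) (x, t) (1, 0)) x := by
  have h1 : HasDerivAt (fun x' : ℝ => ((x' : ℝ), t)) ((1 : ℝ), (0 : ℝ)) x :=
    (hasDerivAt_id x).prodMk (hasDerivAt_const x t)
  exact ((hf.differentiable (by simp)).differentiableAt.hasFDerivAt).comp_hasDerivAt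
    x h1

private lemma hasDerivAt_curry_snd (f : ℝ → ℝ → ℝ)
    (hf : ContDiff ℝ (⊤ : ℕ∞) (Function.uncurry f)) (x t : ℝ) :
    HasDerivAt (fun t' => f x t') (fderiv ℝ (Function.uncurry f) (x, t) (0, 1)) t := by
  have h1 : HasDerivAt (fun t' : ℝ => (x, (t' : ℝ))) ((0 : ℝ), (1 : ℝ)) t :=
    (hasDerivAt_const t x).prodMk (hasDerivAt_id t)
  exact ((hf.differentiable (by simp)).differentiableAt.hasFDerivAt).comp_hasDerivAt
    t h1

private lemma hasDerivAt_fderiv_fst (f : ℝ × ℝ → ℝ)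
    (hf : ContDiff ℝ (⊤ : ℕ∞) f) (x t : ℝ) (w : ℝ × ℝ) :
    HasDerivAt (fun x' => fderiv ℝ f (x', t) w)
      (fderiv ℝ (fderiv ℝ f) (x, t) (1, 0) w) x := by
  have hΦ : Differentiable ℝ (fderiv ℝ f) :=
    (hf.fderiv_right (le_of_eq ENat.coe_top_add_one)).differentiable
      (by simp)
  have h1 : HasDerivAt (fun x' : ℝ => ((x' : ℝ), t)) ((1 : ℝ), (0 : ℝ)) x :=
    (hasDerivAt_id x).prodMk (hasDerivAt_const x t)
  have h2 : HasDerivAt (fun x' => fderiv ℝ f (x', t))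
      (fderiv ℝ (fderiv ℝ f) (x, t) (1, 0)) x :=
    (hΦ.differentiableAt.hasFDerivAt).comp_hasDerivAt x h1
  simpa using h2.clm_apply (hasDerivAt_const x w)

private lemma hasDerivAt_fderiv_snd (f : ℝ × ℝ → ℝ)
    (hf : ContDiff ℝ (⊤ : ℕ∞) f) (x t : ℝ) (w : ℝ × ℝ) :
    HasDerivAt (fun t' => fderiv ℝ f (x, t') w)
      (fderiv ℝ (fderiv ℝ f) (x, t) (0, 1) w) t := by
  have hΦ : Differentiable ℝ (fderiv ℝ f) :=
    (hf.fderiv_right (le_of_eq ENat.coe_top_add_one)).differentiable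
      (by simp)
  have h1 : HasDerivAt (fun t' : ℝ => (x, (t' : ℝ))) ((0 : ℝ), (1 : ℝ)) t :=
    (hasDerivAt_const t x).prodMk (hasDerivAt_id t)
  have h2 : HasDerivAt (fun t' => fderiv ℝ f (x, t'))
      (fderiv ℝ (fderiv ℝ f) (x, t) (0, 1)) t :=
    (hΦ.differentiableAt.hasFDerivAt).comp_hasDerivAt t h1
  simpa using h2.clm_apply (hasDerivAt_const t w)

private lemma symm_snd (f : ℝ × ℝ → ℝ) (hf : ContDiff ℝ (⊤ : ℕ∞) f) (p : ℝ × ℝ)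
    (a b : ℝ × ℝ) :
    fderiv ℝ (fderiv ℝ f) p a b = fderiv ℝ (fderiv ℝ f) p b a :=
  ((hf.contDiffAt.of_le (by exact_mod_cast wt_le 2) : ContDiffAt ℝ 2 f p).isSymmSndFDerivAt
    (by simp)).eq a b

/-- If smooth `u(x,t)`, `v(x,t)` satisfy `u_t = 2u u_x − v` and
`v_x = u_x²`, then `∂_x(v_t − 2u v_x) = 0` identically, i.e. the quantity
`v_t − 2u v_x` is independent of `x` (a function of `t` alone). In particular,
up to an `x`-independent function of time, the pair `(u,v)` satisfies the
regularized hydrodynamic system `u_t = 2u u_x − v`, `v_t = 2u v_x`, equivalent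
to the Whitham-type equation `u_t = 2u u_x − ∂⁻¹u_x²`. -/
theorem whitham_regularization_second_equation
    (u v : ℝ → ℝ → ℝ)
    (hu : ContDiff ℝ (⊤ : ℕ∞) (Function.uncurry u))
    (hv : ContDiff ℝ (⊤ : ℕ∞) (Function.uncurry v))
    (hut : ∀ x t,
      deriv (fun t' => u x t') t
        = 2 * u x t * deriv (fun x' => u x' t) x - v x t)
    (hvx : ∀ x t,
      deriv (fun x' => v x' t) x = (deriv (fun x' => u x' t) x) ^ 2) :
    (∀ x t,
      deriv (fun x' =>
        deriv (fun t' => v x' t') t - 2 * u x' t * deriv (fun y => v y t) x') x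
        = 0)
    ∧ ∀ x₁ x₂ t,
        deriv (fun t' => v x₁ t') t - 2 * u x₁ t * deriv (fun y => v y t) x₁
          = deriv (fun t' => v x₂ t') t - 2 * u x₂ t * deriv (fun y => v y t) x₂ := by
  set U := Function.uncurry u with hU
  set V := Function.uncurry v with hV
  -- deriv-to-fderiv dictionary
  have dux : ∀ x t, deriv (fun x' => u x' t) x = fderiv ℝ U (x, t) (1, 0) :=
    fun x t => (hasDerivAt_curry_fst u hu x t).deriv
  have dut : ∀ x t, deriv (fun t' => u x t') t = fderiv ℝ U (x, t) (0, 1) :=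
    fun x t => (hasDerivAt_curry_snd u hu x t).deriv
  have dvx : ∀ x t, deriv (fun x' => v x' t) x = fderiv ℝ V (x, t) (1, 0) :=
    fun x t => (hasDerivAt_curry_fst v hv x t).deriv
  have dvt : ∀ x t, deriv (fun t' => v x t') t = fderiv ℝ V (x, t) (0, 1) :=
    fun x t => (hasDerivAt_curry_snd v hv x t).deriv
  -- hypotheses in fderiv form
  have Hvx : ∀ x t, fderiv ℝ V (x, t) (1, 0) = (fderiv ℝ U (x, t) (1, 0)) ^ 2 := by
    intro x t; rw [← dvx, ← dux]; exact hvx x t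
  have Hut : ∀ x t, fderiv ℝ U (x, t) (0, 1)
      = 2 * u x t * fderiv ℝ U (x, t) (1, 0) - v x t := by
    intro x t; rw [← dut, ← dux]; exact hut x t
  -- main computation at a point
  have key : ∀ x t,
      HasDerivAt (fun x' =>
        deriv (fun t' => v x' t') t - 2 * u x' t * deriv (fun y => v y t) x') 0 x := by
    intro x t
    set ux := fderiv ℝ U (x, t) (1, 0) with hux
    set uxx := fderiv ℝ (fderiv ℝ U) (x, t) (1, 0) (1, 0) with huxx
    -- ∂_x (u_t) via differentiating Hut in x
    have hLx : HasDerivAt (fun x' => fderiv ℝ U (x', t) (0, 1))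
        (fderiv ℝ (fderiv ℝ U) (x, t) (1, 0) (0, 1)) x :=
      hasDerivAt_fderiv_fst U hu x t (0, 1)
    have hux' : HasDerivAt (fun x' => u x' t) ux x := hasDerivAt_curry_fst u hu x t
    have hfux : HasDerivAt (fun x' => fderiv ℝ U (x', t) (1, 0)) uxx x :=
      hasDerivAt_fderiv_fst U hu x t (1, 0)
    have hvx' : HasDerivAt (fun x' => v x' t) (fderiv ℝ V (x, t) (1, 0)) x :=
      hasDerivAt_curry_fst v hv x t
    have hRx : HasDerivAt (fun x' => 2 * u x' t * fderiv ℝ U (x', t) (1, 0) - v x' t)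
        ((2 * ux) * ux + (2 * u x t) * uxx - fderiv ℝ V (x, t) (1, 0)) x :=
      ((hux'.const_mul 2).mul hfux).sub hvx'
    have hEq1 : (fun x' => fderiv ℝ U (x', t) (0, 1))
        = fun x' => 2 * u x' t * fderiv ℝ U (x', t) (1, 0) - v x' t :=
      funext fun x' => Hut x' t
    have Cuxt : fderiv ℝ (fderiv ℝ U) (x, t) (1, 0) (0, 1)
        = (2 * ux) * ux + (2 * u x t) * uxx - ux ^ 2 := by
      have := (hEq1 ▸ hLx).unique hRx
      rw [this, Hvx x t]
    -- ∂_t (v_x) via differentiating Hvx in t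
    have hLt : HasDerivAt (fun t' => fderiv ℝ V (x, t') (1, 0))
        (fderiv ℝ (fderiv ℝ V) (x, t) (0, 1) (1, 0)) t :=
      hasDerivAt_fderiv_snd V hv x t (1, 0)
    have hfut : HasDerivAt (fun t' => fderiv ℝ U (x, t') (1, 0))
        (fderiv ℝ (fderiv ℝ U) (x, t) (0, 1) (1, 0)) t :=
      hasDerivAt_fderiv_snd U hu x t (1, 0)
    have hRt : HasDerivAt (fun t' => (fderiv ℝ U (x, t') (1, 0)) ^ 2)
        (2 * ux ^ 1 * (fderiv ℝ (fderiv ℝ U) (x, t) (0, 1) (1, 0))) t := by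
      simpa using hfut.fun_pow 2
    have hEq2 : (fun t' => fderiv ℝ V (x, t') (1, 0))
        = fun t' => (fderiv ℝ U (x, t') (1, 0)) ^ 2 :=
      funext fun t' => Hvx x t'
    have Dvtx : fderiv ℝ (fderiv ℝ V) (x, t) (0, 1) (1, 0)
        = 2 * ux ^ 1 * (fderiv ℝ (fderiv ℝ U) (x, t) (0, 1) (1, 0)) :=
      (hEq2 ▸ hLt).unique hRt
    -- symmetry of second derivatives
    have symU : fderiv ℝ (fderiv ℝ U) (x, t) (0, 1) (1, 0)
        = fderiv ℝ (fderiv ℝ U) (x, t) (1, 0) (0, 1) := symm_snd U hu (x, t) _ _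
    have symV : fderiv ℝ (fderiv ℝ V) (x, t) (1, 0) (0, 1)
        = fderiv ℝ (fderiv ℝ V) (x, t) (0, 1) (1, 0) := symm_snd V hv (x, t) _ _
    -- rewrite the target function
    have hfun : (fun x' =>
        deriv (fun t' => v x' t') t - 2 * u x' t * deriv (fun y => v y t) x')
        = fun x' => fderiv ℝ V (x', t) (0, 1)
            - 2 * u x' t * (fderiv ℝ U (x', t) (1, 0)) ^ 2 := by
      funext x'
      rw [dvt x' t, dvx x' t, Hvx x' t]
    -- derivative of the target function
    have hA : HasDerivAt (fun x' => fderiv ℝ V (x', t) (0, 1))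
        (fderiv ℝ (fderiv ℝ V) (x, t) (1, 0) (0, 1)) x :=
      hasDerivAt_fderiv_fst V hv x t (0, 1)
    have hB : HasDerivAt (fun x' => 2 * u x' t * (fderiv ℝ U (x', t) (1, 0)) ^ 2)
        ((2 * ux) * ux ^ 2 + (2 * u x t) * (2 * ux ^ 1 * uxx)) x :=
      (hux'.const_mul 2).mul (hfux.fun_pow 2)
    have hD : HasDerivAt (fun x' => fderiv ℝ V (x', t) (0, 1)
          - 2 * u x' t * (fderiv ℝ U (x', t) (1, 0)) ^ 2)
        (fderiv ℝ (fderiv ℝ V) (x, t) (1, 0) (0, 1)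
          - ((2 * ux) * ux ^ 2 + (2 * u x t) * (2 * ux ^ 1 * uxx))) x := hA.sub hB
    have hzero : fderiv ℝ (fderiv ℝ V) (x, t) (1, 0) (0, 1)
        - ((2 * ux) * ux ^ 2 + (2 * u x t) * (2 * ux ^ 1 * uxx)) = 0 := by
      rw [symV, Dvtx, symU, Cuxt]; ring
    rw [hfun]
    have hD' := hD
    rw [hzero] at hD'
    exact hD'
  refine ⟨fun x t => (key x t).deriv, fun x₁ x₂ t => ?_⟩
  exact is_const_of_deriv_eq_zero
    (fun x => ((key x t).differentiableAt : DifferentiableAt ℝ _ x))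
    (fun x => (key x t).deriv) x₁ x₂
end

section
/- Let u : Ω → ℝ be a smooth function on an open subset Ω of the (x,τ)-plane with u_{xx} > 0 on Ω, satisfying the dispersive flow u_τ = u_{xxx}·(u_{xx})^{−3/2}. Set g := (u_{xx})^{−1/2}. Then the pointwise local conservation law ∂_τ(√(u_{xx})) = ∂_x(½ (g_x)² − g·g_{xx}) holds on Ω; i.e., the density √(u_{xx}) of the conserved functional γ₋₁ satisfies a continuity equation. -/
open Real Filter Topology

/-- Directional derivative of a function of two real variables. -/
noncomputable def DD (v : ℝ × ℝ) (h : ℝ × ℝ → ℝ) (p : ℝ × ℝ) : ℝ := fderiv ℝ h p v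

lemma sliceX {h : ℝ × ℝ → ℝ} {x τ : ℝ} (hd : DifferentiableAt ℝ h (x, τ)) :
    HasDerivAt (fun y => h (y, τ)) (DD (1,0) h (x,τ)) x :=
  hd.hasFDerivAt.comp_hasDerivAt x ((hasDerivAt_id x).prodMk (hasDerivAt_const x τ))

lemma sliceT {h : ℝ × ℝ → ℝ} {x τ : ℝ} (hd : DifferentiableAt ℝ h (x, τ)) :
    HasDerivAt (fun τ' => h (x, τ')) (DD (0,1) h (x,τ)) τ :=
  hd.hasFDerivAt.comp_hasDerivAt τ ((hasDerivAt_const τ x).prodMk (hasDerivAt_id τ))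

lemma contDiffOn_DD {Ω : Set (ℝ×ℝ)} (hΩ : IsOpen Ω) {h : ℝ×ℝ→ℝ}
    (hh : ContDiffOn ℝ (⊤:ℕ∞) h Ω) (v : ℝ×ℝ) : ContDiffOn ℝ (⊤:ℕ∞) (DD v h) Ω :=
  (hh.fderiv_of_isOpen hΩ le_rfl).clm_apply contDiffOn_const

lemma diffAtOfCD {Ω : Set (ℝ×ℝ)} (hΩ : IsOpen Ω) {h : ℝ×ℝ→ℝ} {p : ℝ×ℝ}
    (hh : ContDiffOn ℝ (⊤:ℕ∞) h Ω) (hp : p ∈ Ω) : DifferentiableAt ℝ h p :=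
  (hh.contDiffAt (hΩ.mem_nhds hp)).differentiableAt (by decide)

lemma symmDD {h : ℝ×ℝ→ℝ} {p : ℝ×ℝ} (hh : ContDiffAt ℝ (⊤:ℕ∞) h p) (v w : ℝ×ℝ) :
    DD w (DD v h) p = DD v (DD w h) p := by
  have hd : DifferentiableAt ℝ (fderiv ℝ h) p :=
    (hh.fderiv_right (m := (⊤:ℕ∞)) le_rfl).differentiableAt (by decide)
  have h1 : ∀ e : ℝ×ℝ, HasFDerivAt (DD e h)
      ((ContinuousLinearMap.apply ℝ ℝ e).comp (fderiv ℝ (fderiv ℝ h) p)) p := fun e =>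
    ((ContinuousLinearMap.apply ℝ ℝ e).hasFDerivAt).comp p hd.hasFDerivAt
  have hsym := hh.isSymmSndFDerivAt (by simp; exact WithTop.coe_le_coe.2 (le_top : (2:ℕ∞) ≤ ⊤))
  show fderiv ℝ (DD v h) p w = fderiv ℝ (DD w h) p v
  rw [(h1 v).fderiv, (h1 w).fderiv]
  exact hsym w v

lemma slice2 {Ω : Set (ℝ×ℝ)} (hΩ : IsOpen Ω) {h : ℝ×ℝ→ℝ}
    (hh : ContDiffOn ℝ (⊤:ℕ∞) h Ω) {x τ : ℝ} (hp : (x,τ) ∈ Ω) :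
    deriv (deriv (fun y => h (y,τ))) x = DD (1,0) (DD (1,0) h) (x,τ) := by
  have hsopen : IsOpen {y : ℝ | (y,τ) ∈ Ω} := hΩ.preimage (continuous_id.prodMk continuous_const)
  have hev : deriv (fun y => h (y,τ)) =ᶠ[𝓝 x] fun y => DD (1,0) h (y,τ) := by
    filter_upwards [hsopen.mem_nhds hp] with y hy
    exact (sliceX (diffAtOfCD hΩ hh hy)).deriv
  rw [hev.deriv_eq]
  exact (sliceX (diffAtOfCD hΩ (contDiffOn_DD hΩ hh _) hp)).deriv

/-- Let `u` be smooth on an open subset `Ω` of the `(x,τ)`-plane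
with `u_{xx} > 0` on `Ω`, satisfying the dispersive flow
`u_τ = u_{xxx}·(u_{xx})^{−3/2}`. With `g := (u_{xx})^{−1/2}`, the pointwise
local conservation law `∂_τ(√(u_{xx})) = ∂_x(½ (g_x)² − g·g_{xx})` holds on
`Ω`: the density `√(u_{xx})` of the conserved functional `γ₋₁` satisfies a
continuity equation. -/
theorem dispersive_flow_local_conservation_sqrt_uxx
    (Ω : Set (ℝ × ℝ)) (hΩ : IsOpen Ω) (u : ℝ → ℝ → ℝ)
    (hu : ContDiffOn ℝ (⊤ : ℕ∞) (Function.uncurry u) Ω)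
    (hpos : ∀ x τ, (x, τ) ∈ Ω → 0 < deriv (deriv (fun y => u y τ)) x)
    (hflow : ∀ x τ, (x, τ) ∈ Ω →
      deriv (fun τ' => u x τ') τ
        = deriv (deriv (deriv (fun y => u y τ))) x
            / (deriv (deriv (fun y => u y τ)) x) ^ ((3 : ℝ) / 2)) :
    ∀ x τ, (x, τ) ∈ Ω →
      deriv (fun τ' => Real.sqrt (deriv (deriv (fun y => u y τ')) x)) τ
        = deriv (fun x' =>
            (1 / 2) *
              (deriv (fun y => 1 / Real.sqrt (deriv (deriv (fun z => u z τ)) y)) x') ^ 2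
            - (1 / Real.sqrt (deriv (deriv (fun z => u z τ)) x')) *
                deriv (deriv
                  (fun y => 1 / Real.sqrt (deriv (deriv (fun z => u z τ)) y))) x') x := by
  intro x τ hp
  have hXopen : IsOpen {y : ℝ | (y, τ) ∈ Ω} :=
    hΩ.preimage (continuous_id.prodMk continuous_const)
  have hTopen : IsOpen {t : ℝ | (x, t) ∈ Ω} :=
    hΩ.preimage (continuous_const.prodMk continuous_id)
  have hxmem : x ∈ {y : ℝ | (y, τ) ∈ Ω} := hp
  have hτmem : τ ∈ {t : ℝ | (x, t) ∈ Ω} := hp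
  set b : ℝ → ℝ := deriv (deriv (fun y => u y τ)) with hbdef
  set g : ℝ → ℝ := fun y => 1 / Real.sqrt (b y) with hgdef
  -- smoothness on the x-slice
  have hA : ContDiffOn ℝ (⊤:ℕ∞) (fun y => u y τ) {y : ℝ | (y, τ) ∈ Ω} :=
    hu.comp ((contDiff_id.prodMk contDiff_const).contDiffOn) (fun y hy => hy)
  have hb : ContDiffOn ℝ (⊤:ℕ∞) b {y : ℝ | (y, τ) ∈ Ω} :=
    (hA.deriv_of_isOpen hXopen le_rfl).deriv_of_isOpen hXopen le_rfl
  have hbpos : ∀ y ∈ {y : ℝ | (y, τ) ∈ Ω}, 0 < b y := fun y hy => hpos y τ hy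
  have hg : ContDiffOn ℝ (⊤:ℕ∞) g {y : ℝ | (y, τ) ∈ Ω} := by
    intro y hy
    have hby := hbpos y hy
    have h1 : ContDiffAt ℝ (⊤:ℕ∞) (fun z => Real.sqrt (b z)) y :=
      (Real.contDiffAt_sqrt (ne_of_gt hby)).comp y (hb.contDiffAt (hXopen.mem_nhds hy))
    exact ((contDiffAt_const (c := (1:ℝ))).div h1
      (ne_of_gt (Real.sqrt_pos.mpr hby))).contDiffWithinAt
  have hg1 : ContDiffOn ℝ (⊤:ℕ∞) (deriv g) {y : ℝ | (y, τ) ∈ Ω} :=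
    hg.deriv_of_isOpen hXopen le_rfl
  have hg2 : ContDiffOn ℝ (⊤:ℕ∞) (deriv (deriv g)) {y : ℝ | (y, τ) ∈ Ω} :=
    hg1.deriv_of_isOpen hXopen le_rfl
  have hDAt : ∀ {f : ℝ → ℝ}, ContDiffOn ℝ (⊤:ℕ∞) f {y : ℝ | (y, τ) ∈ Ω} →
      ∀ y ∈ {y : ℝ | (y, τ) ∈ Ω}, HasDerivAt f (deriv f y) y := by
    intro f hf y hy
    exact ((hf.contDiffAt (hXopen.mem_nhds hy)).differentiableAt (by decide)).hasDerivAt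
  -- derivative of g
  have hderivg : ∀ y ∈ {y : ℝ | (y, τ) ∈ Ω},
      deriv g y = -(deriv b y) / (2 * Real.sqrt (b y) * b y) := by
    intro y hy
    have hby := hbpos y hy
    have hne : Real.sqrt (b y) ≠ 0 := ne_of_gt (Real.sqrt_pos.mpr hby)
    have hsq : HasDerivAt (fun z => Real.sqrt (b z))
        (1 / (2 * Real.sqrt (b y)) * deriv b y) y :=
      (Real.hasDerivAt_sqrt (ne_of_gt hby)).comp y (hDAt hb y hy)
    have hinv : HasDerivAt (fun z => (Real.sqrt (b z))⁻¹)
        (-(1 / (2 * Real.sqrt (b y)) * deriv b y) / (Real.sqrt (b y))^2) y := hsq.inv hne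
    have hgd : HasDerivAt g
        (-(1 / (2 * Real.sqrt (b y)) * deriv b y) / (Real.sqrt (b y))^2) y := by
      simpa only [hgdef, one_div] using hinv
    rw [hgd.deriv]
    have h2 : Real.sqrt (b y) ^ 2 = b y := Real.sq_sqrt hby.le
    rw [h2]
    field_simp
  -- the flow right-hand side equals -2 g'
  have hphi : ∀ y ∈ {y : ℝ | (y, τ) ∈ Ω},
      deriv b y / (b y) ^ ((3:ℝ)/2) = -2 * deriv g y := by
    intro y hy
    have hby := hbpos y hy
    have hne : Real.sqrt (b y) ≠ 0 := ne_of_gt (Real.sqrt_pos.mpr hby)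
    rw [hderivg y hy]
    have h32 : (b y) ^ ((3:ℝ)/2) = b y * Real.sqrt (b y) := by
      rw [show ((3:ℝ)/2) = 1 + 1/2 by norm_num, Real.rpow_add hby, Real.rpow_one,
        ← Real.sqrt_eq_rpow]
    rw [h32]
    field_simp
  -- rewrite the τ-derivative via the 2D directional derivatives
  have hevτ : (fun τ' => Real.sqrt (deriv (deriv (fun y => u y τ')) x)) =ᶠ[𝓝 τ]
      (fun τ' => Real.sqrt (DD (1,0) (DD (1,0) (Function.uncurry u)) (x, τ'))) := by
    filter_upwards [hTopen.mem_nhds hτmem] with t ht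
    exact congrArg Real.sqrt (slice2 hΩ hu ht)
  rw [hevτ.deriv_eq]
  have hW : ContDiffOn ℝ (⊤:ℕ∞) (DD (1,0) (DD (1,0) (Function.uncurry u))) Ω :=
    contDiffOn_DD hΩ (contDiffOn_DD hΩ hu _) _
  have hWslice : HasDerivAt (fun τ' => DD (1,0) (DD (1,0) (Function.uncurry u)) (x,τ'))
      (DD (0,1) (DD (1,0) (DD (1,0) (Function.uncurry u))) (x,τ)) τ :=
    sliceT (diffAtOfCD hΩ hW hp)
  have hWval : DD (1,0) (DD (1,0) (Function.uncurry u)) (x,τ) = b x :=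
    (slice2 hΩ hu hp).symm
  have hWpos : 0 < DD (1,0) (DD (1,0) (Function.uncurry u)) (x,τ) :=
    hWval ▸ hbpos x hxmem
  have hld : deriv (fun τ' => Real.sqrt (DD (1,0) (DD (1,0) (Function.uncurry u)) (x, τ'))) τ
      = 1 / (2 * Real.sqrt (DD (1,0) (DD (1,0) (Function.uncurry u)) (x,τ)))
          * DD (0,1) (DD (1,0) (DD (1,0) (Function.uncurry u))) (x,τ) :=
    HasDerivAt.deriv ((Real.hasDerivAt_sqrt (ne_of_gt hWpos)).comp τ hWslice)
  rw [hld]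
  -- symmetry of mixed partials
  have hD1U : ContDiffAt ℝ (⊤:ℕ∞) (DD (1,0) (Function.uncurry u)) (x,τ) :=
    (contDiffOn_DD hΩ hu _).contDiffAt (hΩ.mem_nhds hp)
  have hswap1 : DD (0,1) (DD (1,0) (DD (1,0) (Function.uncurry u))) (x,τ)
      = DD (1,0) (DD (0,1) (DD (1,0) (Function.uncurry u))) (x,τ) :=
    symmDD hD1U (1,0) (0,1)
  have hswapfun : DD (0,1) (DD (1,0) (Function.uncurry u)) =ᶠ[𝓝 (x,τ)]
      DD (1,0) (DD (0,1) (Function.uncurry u)) := by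
    filter_upwards [hΩ.mem_nhds hp] with q hq
    exact symmDD (hu.contDiffAt (hΩ.mem_nhds hq)) (1,0) (0,1)
  have hswap2 : DD (1,0) (DD (0,1) (DD (1,0) (Function.uncurry u))) (x,τ)
      = DD (1,0) (DD (1,0) (DD (0,1) (Function.uncurry u))) (x,τ) := by
    show fderiv ℝ (DD (0,1) (DD (1,0) (Function.uncurry u))) (x,τ) (1,0)
      = fderiv ℝ (DD (1,0) (DD (0,1) (Function.uncurry u))) (x,τ) (1,0)
    rw [hswapfun.fderiv_eq]
  -- back to the slice
  have hD2U : ContDiffOn ℝ (⊤:ℕ∞) (DD (0,1) (Function.uncurry u)) Ω := contDiffOn_DD hΩ hu _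
  have hback : DD (1,0) (DD (1,0) (DD (0,1) (Function.uncurry u))) (x,τ)
      = deriv (deriv (fun y => DD (0,1) (Function.uncurry u) (y, τ))) x :=
    (slice2 hΩ hD2U hp).symm
  have hflowslice : (fun y => DD (0,1) (Function.uncurry u) (y,τ)) =ᶠ[𝓝 x]
      (fun y => deriv b y / (b y) ^ ((3:ℝ)/2)) := by
    filter_upwards [hXopen.mem_nhds hxmem] with y hy
    have h1 : deriv (fun τ' => u y τ') τ = DD (0,1) (Function.uncurry u) (y,τ) :=
      (sliceT (diffAtOfCD hΩ hu hy)).deriv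
    rw [← h1, hflow y τ hy]
  have hphiev : (fun y => deriv b y / (b y) ^ ((3:ℝ)/2)) =ᶠ[𝓝 x]
      (fun y => -2 * deriv g y) := by
    filter_upwards [hXopen.mem_nhds hxmem] with y hy
    exact hphi y hy
  have hev2 : (fun y => DD (0,1) (Function.uncurry u) (y,τ)) =ᶠ[𝓝 x]
      (fun y => -2 * deriv g y) := hflowslice.trans hphiev
  have hstep : deriv (deriv (fun y => DD (0,1) (Function.uncurry u) (y, τ))) x
      = -2 * deriv (deriv (deriv g)) x := by
    have h1 : deriv (fun y => DD (0,1) (Function.uncurry u) (y,τ)) =ᶠ[𝓝 x]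
        (fun y => -2 * deriv (deriv g) y) := by
      refine (hev2.deriv).trans (Eventually.of_forall fun y => ?_)
      exact deriv_const_mul_field (-2)
    rw [h1.deriv_eq, deriv_const_mul_field (-2)]
  -- right-hand side
  have hg1d : HasDerivAt (deriv g) (deriv (deriv g) x) x := hDAt hg1 x hxmem
  have hg2d : HasDerivAt (deriv (deriv g)) (deriv (deriv (deriv g)) x) x := hDAt hg2 x hxmem
  have h0 : HasDerivAt (fun x' => 1 / Real.sqrt (b x')) (deriv g x) x := by
    have := hDAt hg x hxmem
    rwa [hgdef] at this
  have hF : HasDerivAt (fun x' => (1/2) * (deriv g x')^2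
        - (1 / Real.sqrt (b x')) * deriv (deriv g) x')
      ((1/2) * ((2:ℕ) * deriv g x ^ (2-1) * deriv (deriv g) x)
        - (deriv g x * deriv (deriv g) x
            + (1 / Real.sqrt (b x)) * deriv (deriv (deriv g)) x)) x :=
    ((hg1d.pow 2).const_mul (1/2)).sub (h0.mul hg2d)
  rw [hF.deriv, hWval, hswap1, hswap2, hback, hstep]
  have hne : Real.sqrt (b x) ≠ 0 := ne_of_gt (Real.sqrt_pos.mpr (hbpos x hxmem))
  field_simp
  ring
end

section
/- Let u : Ω → ℝ be a smooth function on an open subset Ω of the (x,τ)-plane with u_{xx} > 0 on Ω, satisfying u_τ = u_{xxx}·(u_{xx})^{−3/2}. Then the function g := (u_{xx})^{−1/2} satisfies the Harry Dym-type equation g_τ = g³·g_{xxx} on Ω. -/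
open Real Filter Topology

/-! Auxiliary machinery: directional partial derivatives for functions on `ℝ × ℝ`. -/

noncomputable def pd (v : ℝ × ℝ) (f : ℝ × ℝ → ℝ) : ℝ × ℝ → ℝ := fun p => fderiv ℝ f p v

lemma pd_contDiffAt {f : ℝ × ℝ → ℝ} {p : ℝ × ℝ} (v : ℝ × ℝ)
    (hf : ContDiffAt ℝ (⊤ : ℕ∞) f p) : ContDiffAt ℝ (⊤ : ℕ∞) (pd v f) p := by
  have h1 : ContDiffAt ℝ (⊤ : ℕ∞) (fderiv ℝ f) p := hf.fderiv_right (by simp)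
  exact h1.clm_apply contDiffAt_const

lemma contDiffAt_top_diff {f : ℝ × ℝ → ℝ} {p : ℝ × ℝ}
    (hf : ContDiffAt ℝ (⊤ : ℕ∞) f p) : DifferentiableAt ℝ f p :=
  hf.differentiableAt (by simp)

lemma hasDerivAt_slice_x {f : ℝ × ℝ → ℝ} {x τ : ℝ}
    (hf : DifferentiableAt ℝ f (x, τ)) :
    HasDerivAt (fun y => f (y, τ)) (pd (1, 0) f (x, τ)) x := by
  have h1 : HasFDerivAt (fun y : ℝ => (y, τ))
      ((ContinuousLinearMap.id ℝ ℝ).prod 0) x :=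
    (hasFDerivAt_id x).prodMk (hasFDerivAt_const τ x)
  have h2 := (hf.hasFDerivAt.comp x h1).hasDerivAt
  exact h2

lemma hasDerivAt_slice_t {f : ℝ × ℝ → ℝ} {x τ : ℝ}
    (hf : DifferentiableAt ℝ f (x, τ)) :
    HasDerivAt (fun s => f (x, s)) (pd (0, 1) f (x, τ)) τ := by
  have h1 : HasFDerivAt (fun s : ℝ => (x, s))
      ((0 : ℝ →L[ℝ] ℝ).prod (ContinuousLinearMap.id ℝ ℝ)) τ :=
    (hasFDerivAt_const x τ).prodMk (hasFDerivAt_id τ)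
  have h2 := (hf.hasFDerivAt.comp τ h1).hasDerivAt
  exact h2

lemma pd_pd_eq_snd_fderiv {f : ℝ × ℝ → ℝ} {p : ℝ × ℝ} (v w : ℝ × ℝ)
    (hf : ContDiffAt ℝ (⊤ : ℕ∞) f p) :
    pd w (pd v f) p = fderiv ℝ (fderiv ℝ f) p w v := by
  have hd : DifferentiableAt ℝ (fderiv ℝ f) p :=
    (hf.fderiv_right (m := 1) ((WithTop.coe_le_coe).2 le_top)).differentiableAt (by simp)
  have : fderiv ℝ (fun q => fderiv ℝ f q v) p
      = (fderiv ℝ f p).comp (fderiv ℝ (fun _ : ℝ × ℝ => v) p)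
        + (fderiv ℝ (fderiv ℝ f) p).flip v :=
    fderiv_clm_apply hd (differentiableAt_const v)
  show fderiv ℝ (fun q => fderiv ℝ f q v) p w = _
  rw [this]
  simp

lemma pd_symm {f : ℝ × ℝ → ℝ} {p : ℝ × ℝ} (v w : ℝ × ℝ)
    (hf : ContDiffAt ℝ (⊤ : ℕ∞) f p) :
    pd w (pd v f) p = pd v (pd w f) p := by
  rw [pd_pd_eq_snd_fderiv v w hf, pd_pd_eq_snd_fderiv w v hf]
  exact (hf.isSymmSndFDerivAt (by simp [minSmoothness_of_isRCLikeNormedField]; exact WithTop.coe_le_coe.2 (le_top : (2:ℕ∞) ≤ ⊤))).eq w v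

/-! Slice neighbourhoods. -/

lemma sliceX_mem {Ω : Set (ℝ × ℝ)} (hΩ : IsOpen Ω) {x τ : ℝ} (hp : (x, τ) ∈ Ω) :
    {y : ℝ | (y, τ) ∈ Ω} ∈ 𝓝 x :=
  (hΩ.preimage (continuous_id.prodMk continuous_const)).mem_nhds hp

lemma sliceT_mem {Ω : Set (ℝ × ℝ)} (hΩ : IsOpen Ω) {x τ : ℝ} (hp : (x, τ) ∈ Ω) :
    {s : ℝ | (x, s) ∈ Ω} ∈ 𝓝 τ :=
  (hΩ.preimage (continuous_const.prodMk continuous_id)).mem_nhds hp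

/-! deriv of slices vs `pd`. -/

lemma derivX {f : ℝ × ℝ → ℝ} {x τ : ℝ} (hf : DifferentiableAt ℝ f (x, τ)) :
    deriv (fun y => f (y, τ)) x = pd (1, 0) f (x, τ) :=
  (hasDerivAt_slice_x hf).deriv

lemma derivT {f : ℝ × ℝ → ℝ} {x τ : ℝ} (hf : DifferentiableAt ℝ f (x, τ)) :
    deriv (fun s => f (x, s)) τ = pd (0, 1) f (x, τ) :=
  (hasDerivAt_slice_t hf).deriv

lemma derivXX {Ω : Set (ℝ × ℝ)} (hΩ : IsOpen Ω) {f : ℝ × ℝ → ℝ}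
    (hs : ∀ q ∈ Ω, ContDiffAt ℝ (⊤ : ℕ∞) f q) {x τ : ℝ} (hp : (x, τ) ∈ Ω) :
    deriv (deriv (fun y => f (y, τ))) x = pd (1, 0) (pd (1, 0) f) (x, τ) := by
  have h1 : deriv (fun y => f (y, τ)) =ᶠ[𝓝 x] fun y => pd (1, 0) f (y, τ) := by
    filter_upwards [sliceX_mem hΩ hp] with y hy
    exact derivX (contDiffAt_top_diff (hs _ hy))
  rw [h1.deriv_eq]
  exact derivX (contDiffAt_top_diff (pd_contDiffAt _ (hs _ hp)))

lemma derivXXX {Ω : Set (ℝ × ℝ)} (hΩ : IsOpen Ω) {f : ℝ × ℝ → ℝ}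
    (hs : ∀ q ∈ Ω, ContDiffAt ℝ (⊤ : ℕ∞) f q) {x τ : ℝ} (hp : (x, τ) ∈ Ω) :
    deriv (deriv (deriv (fun y => f (y, τ)))) x
      = pd (1, 0) (pd (1, 0) (pd (1, 0) f)) (x, τ) := by
  have h1 : deriv (deriv (fun y => f (y, τ))) =ᶠ[𝓝 x]
      fun y => pd (1, 0) (pd (1, 0) f) (y, τ) := by
    filter_upwards [sliceX_mem hΩ hp] with y hy
    exact derivXX hΩ hs hy
  rw [h1.deriv_eq]
  exact derivX (contDiffAt_top_diff (pd_contDiffAt _ (pd_contDiffAt _ (hs _ hp))))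

lemma pd_congr {Ω : Set (ℝ × ℝ)} (hΩ : IsOpen Ω) {f g : ℝ × ℝ → ℝ} (v : ℝ × ℝ)
    (hfg : ∀ q ∈ Ω, f q = g q) {p : ℝ × ℝ} (hp : p ∈ Ω) : pd v f p = pd v g p := by
  unfold pd
  rw [Filter.EventuallyEq.fderiv_eq (eventually_of_mem (hΩ.mem_nhds hp) hfg)]

lemma deriv_congr_on {S : Set ℝ} (hS : IsOpen S) {f g : ℝ → ℝ}
    (h : ∀ y ∈ S, f y = g y) : ∀ y ∈ S, deriv f y = deriv g y := fun _ hy =>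
  Filter.EventuallyEq.deriv_eq (eventually_of_mem (hS.mem_nhds hy) h)

/-! Pointwise computation rules for `pd`. -/

lemma pd_mul {f g : ℝ × ℝ → ℝ} {p : ℝ × ℝ} (v : ℝ × ℝ)
    (hf : DifferentiableAt ℝ f p) (hg : DifferentiableAt ℝ g p) :
    pd v (fun q => f q * g q) p = pd v f p * g p + f p * pd v g p := by
  unfold pd
  rw [fderiv_fun_mul hf hg]
  simp only [ContinuousLinearMap.add_apply, ContinuousLinearMap.smul_apply, smul_eq_mul]
  ring

lemma pd_add {f g : ℝ × ℝ → ℝ} {p : ℝ × ℝ} (v : ℝ × ℝ)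
    (hf : DifferentiableAt ℝ f p) (hg : DifferentiableAt ℝ g p) :
    pd v (fun q => f q + g q) p = pd v f p + pd v g p := by
  unfold pd
  rw [fderiv_fun_add hf hg]; rfl

lemma pd_sub {f g : ℝ × ℝ → ℝ} {p : ℝ × ℝ} (v : ℝ × ℝ)
    (hf : DifferentiableAt ℝ f p) (hg : DifferentiableAt ℝ g p) :
    pd v (fun q => f q - g q) p = pd v f p - pd v g p := by
  unfold pd
  rw [fderiv_fun_sub hf hg]; rfl

lemma pd_const_mul {f : ℝ × ℝ → ℝ} {p : ℝ × ℝ} (v : ℝ × ℝ) (c : ℝ)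
    (hf : DifferentiableAt ℝ f p) :
    pd v (fun q => c * f q) p = c * pd v f p := by
  unfold pd
  rw [fderiv_const_mul hf c]
  simp only [ContinuousLinearMap.smul_apply, smul_eq_mul]

lemma pd_rpow {f : ℝ × ℝ → ℝ} {p : ℝ × ℝ} (v : ℝ × ℝ) (r : ℝ)
    (hf : DifferentiableAt ℝ f p) (h0 : f p ≠ 0) :
    pd v (fun q => f q ^ r) p = r * f p ^ (r - 1) * pd v f p := by
  have h := (Real.hasDerivAt_rpow_const (p := r) (Or.inl h0)).comp_hasFDerivAt p
    hf.hasFDerivAt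
  have h' : HasFDerivAt (fun q => f q ^ r)
      ((r * f p ^ (r - 1)) • fderiv ℝ f p) p := h
  unfold pd
  rw [h'.fderiv]
  simp only [ContinuousLinearMap.smul_apply, smul_eq_mul]

lemma one_div_sqrt_eq {t : ℝ} (ht : 0 < t) : 1 / Real.sqrt t = t ^ (-(1/2) : ℝ) := by
  rw [Real.sqrt_eq_rpow, one_div, ← Real.rpow_neg ht.le]

/-- Let `u` be smooth on an open subset `Ω` of the
`(x,τ)`-plane with `u_{xx} > 0` on `Ω`, satisfying
`u_τ = u_{xxx}·(u_{xx})^{−3/2}`. Then the function `g := (u_{xx})^{−1/2}`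
satisfies the Harry Dym-type equation `g_τ = g³·g_{xxx}` on `Ω`. -/
theorem dispersive_flow_harry_dym
    (Ω : Set (ℝ × ℝ)) (hΩ : IsOpen Ω) (u : ℝ → ℝ → ℝ)
    (hu : ContDiffOn ℝ (⊤ : ℕ∞) (Function.uncurry u) Ω)
    (hpos : ∀ x τ, (x, τ) ∈ Ω → 0 < deriv (deriv (fun y => u y τ)) x)
    (hflow : ∀ x τ, (x, τ) ∈ Ω →
      deriv (fun τ' => u x τ') τ
        = deriv (deriv (deriv (fun y => u y τ))) x
            / (deriv (deriv (fun y => u y τ)) x) ^ ((3 : ℝ) / 2)) :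
    ∀ x τ, (x, τ) ∈ Ω →
      deriv (fun τ' => 1 / Real.sqrt (deriv (deriv (fun y => u y τ')) x)) τ
        = (1 / Real.sqrt (deriv (deriv (fun y => u y τ)) x)) ^ 3 *
            deriv (deriv (deriv
              (fun y => 1 / Real.sqrt (deriv (deriv (fun z => u z τ)) y)))) x := by
  intro x τ hp
  set F : ℝ × ℝ → ℝ := Function.uncurry u with hF_def
  have hs : ∀ q ∈ Ω, ContDiffAt ℝ (⊤ : ℕ∞) F q := fun q hq =>
    hu.contDiffAt (hΩ.mem_nhds hq)
  set A : ℝ × ℝ → ℝ := pd (1, 0) (pd (1, 0) F) with hA_def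
  set B : ℝ × ℝ → ℝ := pd (1, 0) A with hB_def
  set C : ℝ × ℝ → ℝ := pd (1, 0) B with hC_def
  have hsA : ∀ q ∈ Ω, ContDiffAt ℝ (⊤ : ℕ∞) A q := fun q hq => by
    rw [hA_def]; exact pd_contDiffAt _ (pd_contDiffAt _ (hs q hq))
  have hsB : ∀ q ∈ Ω, ContDiffAt ℝ (⊤ : ℕ∞) B q := fun q hq => by
    rw [hB_def]; exact pd_contDiffAt _ (hsA q hq)
  have hsC : ∀ q ∈ Ω, ContDiffAt ℝ (⊤ : ℕ∞) C q := fun q hq => by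
    rw [hC_def]; exact pd_contDiffAt _ (hsB q hq)
  have hdA : ∀ q ∈ Ω, DifferentiableAt ℝ A q := fun q hq => contDiffAt_top_diff (hsA q hq)
  have hdB : ∀ q ∈ Ω, DifferentiableAt ℝ B q := fun q hq => contDiffAt_top_diff (hsB q hq)
  have hdC : ∀ q ∈ Ω, DifferentiableAt ℝ C q := fun q hq => contDiffAt_top_diff (hsC q hq)
  have hAq : ∀ y s, (y, s) ∈ Ω → deriv (deriv (fun z => u z s)) y = A (y, s) := by
    intro y s hq
    rw [hA_def]
    exact derivXX hΩ hs hq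
  have hBq : ∀ y s, (y, s) ∈ Ω → deriv (deriv (deriv (fun z => u z s))) y = B (y, s) := by
    intro y s hq
    rw [hB_def, hA_def]
    exact derivXXX hΩ hs hq
  have hApos : ∀ q ∈ Ω, 0 < A q := by
    rintro ⟨y, s⟩ hq
    have h1 := hpos y s hq
    rwa [hAq y s hq] at h1
  have hAne : ∀ q ∈ Ω, A q ≠ 0 := fun q hq => ne_of_gt (hApos q hq)
  -- the flow equation in `pd` form
  have hflow' : ∀ q ∈ Ω, pd (0, 1) F q = B q * A q ^ (-(3/2) : ℝ) := by
    rintro ⟨y, s⟩ hq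
    have h1 : pd (0, 1) F (y, s) = deriv (fun τ' => u y τ') s :=
      (derivT (contDiffAt_top_diff (hs _ hq))).symm
    rw [h1, hflow y s hq, hBq y s hq, hAq y s hq, div_eq_mul_inv,
      ← Real.rpow_neg (hApos _ hq).le]
  -- first x-derivative of the flow
  have step1 : ∀ q ∈ Ω, pd (1, 0) (pd (0, 1) F) q
      = C q * A q ^ (-(3/2) : ℝ) + (-(3/2)) * (B q * B q * A q ^ (-(5/2) : ℝ)) := by
    intro q hq
    rw [pd_congr hΩ (1, 0) hflow' hq]
    rw [pd_mul (f := B) (g := fun r => A r ^ (-(3/2) : ℝ)) (1, 0) (hdB q hq)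
      ((hdA q hq).rpow_const (Or.inl (hAne q hq)))]
    rw [pd_rpow (1, 0) (-(3/2)) (hdA q hq) (hAne q hq)]
    rw [show (-(3/2) : ℝ) - 1 = -(5/2) by norm_num, ← hB_def, ← hC_def]
    ring
  -- the function g = A^{-1/2}
  set G : ℝ × ℝ → ℝ := fun q => A q ^ (-(1/2) : ℝ) with hG_def
  have hsG : ∀ q ∈ Ω, ContDiffAt ℝ (⊤ : ℕ∞) G q := fun q hq =>
    (hsA q hq).rpow_const_of_ne (hAne q hq)
  have hGq : ∀ y s, (y, s) ∈ Ω →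
      1 / Real.sqrt (deriv (deriv (fun z => u z s)) y) = G (y, s) := by
    intro y s hq
    rw [hAq y s hq, hG_def]
    exact one_div_sqrt_eq (hApos _ hq)
  -- first and second x-derivatives of G on Ω
  have g1 : ∀ q ∈ Ω, pd (1, 0) G q = -(1/2) * A q ^ (-(3/2) : ℝ) * B q := by
    intro q hq
    rw [hG_def, pd_rpow (1, 0) (-(1/2)) (hdA q hq) (hAne q hq), ← hB_def,
      show (-(1/2) : ℝ) - 1 = -(3/2) by norm_num]
  have g2 : ∀ q ∈ Ω, pd (1, 0) (pd (1, 0) G) q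
      = -(1/2) * (-(3/2) * A q ^ (-(5/2) : ℝ) * B q) * B q
        + -(1/2) * A q ^ (-(3/2) : ℝ) * C q := by
    intro q hq
    rw [pd_congr hΩ (1, 0) g1 hq]
    rw [pd_mul (f := fun r => -(1/2) * A r ^ (-(3/2) : ℝ)) (g := B) (1, 0)
      (((hdA q hq).rpow_const (Or.inl (hAne q hq))).const_mul _) (hdB q hq)]
    rw [pd_const_mul (1, 0) (-(1/2)) ((hdA q hq).rpow_const (Or.inl (hAne q hq)))]
    rw [pd_rpow (1, 0) (-(3/2)) (hdA q hq) (hAne q hq), ← hB_def, ← hC_def,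
      show (-(3/2) : ℝ) - 1 = -(5/2) by norm_num]
  -- rewrite the LHS of the goal
  have hevL : (fun τ' => 1 / Real.sqrt (deriv (deriv (fun y => u y τ')) x))
      =ᶠ[nhds τ] fun s => G (x, s) := by
    filter_upwards [sliceT_mem hΩ hp] with s hs'
    exact hGq x s hs'
  rw [hevL.deriv_eq, derivT (contDiffAt_top_diff (hsG _ hp))]
  -- rewrite the RHS of the goal
  rw [hGq x τ hp]
  have hS : IsOpen {y : ℝ | (y, τ) ∈ Ω} := hΩ.preimage (continuous_id.prodMk continuous_const)
  have hpx : x ∈ {y : ℝ | (y, τ) ∈ Ω} := hp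
  have k3 := deriv_congr_on hS (deriv_congr_on hS (deriv_congr_on hS
    (fun y hy => hGq y τ hy))) x hpx
  rw [k3, derivXXX hΩ hsG hp]
  -- compute pd (0,1) G
  have hpdG : pd (0, 1) G (x, τ)
      = -(1/2) * A (x, τ) ^ (-(3/2) : ℝ) * pd (0, 1) A (x, τ) := by
    rw [hG_def, pd_rpow (0, 1) (-(1/2)) (hdA _ hp) (hAne _ hp),
      show (-(1/2) : ℝ) - 1 = -(3/2) by norm_num]
  rw [hpdG]
  -- swap the mixed partials
  have hswap : pd (0, 1) A (x, τ) = pd (1, 0) (pd (1, 0) (pd (0, 1) F)) (x, τ) := by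
    rw [hA_def]
    rw [pd_symm (1, 0) (0, 1) (pd_contDiffAt _ (hs _ hp))]
    exact pd_congr hΩ (1, 0) (fun q hq => pd_symm (1, 0) (0, 1) (hs q hq)) hp
  rw [hswap]
  -- expand the second x-derivative of the flow expression
  rw [pd_congr hΩ (1, 0) step1 hp]
  have hdrpow3 : DifferentiableAt ℝ (fun r => A r ^ (-(3/2) : ℝ)) (x, τ) :=
    (hdA _ hp).rpow_const (Or.inl (hAne _ hp))
  have hdrpow5 : DifferentiableAt ℝ (fun r => A r ^ (-(5/2) : ℝ)) (x, τ) :=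
    (hdA _ hp).rpow_const (Or.inl (hAne _ hp))
  rw [pd_add (f := fun q => C q * A q ^ (-(3/2) : ℝ))
    (g := fun q => (-(3/2)) * (B q * B q * A q ^ (-(5/2) : ℝ))) (1, 0)
    ((hdC _ hp).mul hdrpow3)
    ((((hdB _ hp).fun_mul (hdB _ hp)).fun_mul hdrpow5).const_mul _)]
  rw [pd_mul (f := C) (g := fun q => A q ^ (-(3/2) : ℝ)) (1, 0) (hdC _ hp) hdrpow3]
  rw [pd_const_mul (1, 0) (-(3/2)) (((hdB _ hp).fun_mul (hdB _ hp)).fun_mul hdrpow5)]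
  rw [pd_mul (f := fun q => B q * B q) (g := fun q => A q ^ (-(5/2) : ℝ)) (1, 0)
    ((hdB _ hp).mul (hdB _ hp)) hdrpow5]
  rw [pd_mul (f := B) (g := B) (1, 0) (hdB _ hp) (hdB _ hp)]
  rw [pd_rpow (1, 0) (-(3/2)) (hdA _ hp) (hAne _ hp)]
  rw [pd_rpow (1, 0) (-(5/2)) (hdA _ hp) (hAne _ hp)]
  rw [show (-(3/2) : ℝ) - 1 = -(5/2) by norm_num,
    show (-(5/2) : ℝ) - 1 = -(7/2) by norm_num, ← hB_def, ← hC_def]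
  -- expand the third x-derivative of G
  rw [pd_congr hΩ (1, 0) g2 hp]
  have hdT1 : DifferentiableAt ℝ
      (fun q => -(1/2) * (-(3/2) * A q ^ (-(5/2) : ℝ) * B q) * B q) (x, τ) :=
    ((((hdrpow5.const_mul _).mul (hdB _ hp)).const_mul _).mul (hdB _ hp))
  have hdT2 : DifferentiableAt ℝ
      (fun q => -(1/2) * A q ^ (-(3/2) : ℝ) * C q) (x, τ) :=
    ((hdrpow3.const_mul _).mul (hdC _ hp))
  rw [pd_add (f := fun q => -(1/2) * (-(3/2) * A q ^ (-(5/2) : ℝ) * B q) * B q)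
    (g := fun q => -(1/2) * A q ^ (-(3/2) : ℝ) * C q) (1, 0) hdT1 hdT2]
  rw [pd_mul (f := fun q => -(1/2) * (-(3/2) * A q ^ (-(5/2) : ℝ) * B q)) (g := B)
    (1, 0) (((hdrpow5.const_mul _).fun_mul (hdB _ hp)).const_mul _) (hdB _ hp)]
  rw [pd_const_mul (1, 0) (-(1/2)) ((hdrpow5.const_mul _).fun_mul (hdB _ hp))]
  rw [pd_mul (f := fun q => -(3/2) * A q ^ (-(5/2) : ℝ)) (g := B) (1, 0)
    (hdrpow5.const_mul _) (hdB _ hp)]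
  rw [pd_const_mul (1, 0) (-(3/2)) hdrpow5]
  rw [pd_mul (f := fun q => -(1/2) * A q ^ (-(3/2) : ℝ)) (g := C) (1, 0)
    (hdrpow3.const_mul _) (hdC _ hp)]
  rw [pd_const_mul (1, 0) (-(1/2)) hdrpow3]
  rw [pd_rpow (1, 0) (-(3/2)) (hdA _ hp) (hAne _ hp)]
  rw [pd_rpow (1, 0) (-(5/2)) (hdA _ hp) (hAne _ hp)]
  rw [show (-(3/2) : ℝ) - 1 = -(5/2) by norm_num,
    show (-(5/2) : ℝ) - 1 = -(7/2) by norm_num, ← hB_def, ← hC_def]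
  -- final algebra
  simp only [hG_def]
  have ha := (hApos _ hp).le
  have hs3 : A (x, τ) ^ (-(3/2) : ℝ) = (A (x, τ) ^ (-(1/2) : ℝ)) ^ (3 : ℕ) := by
    rw [← Real.rpow_natCast (A (x, τ) ^ (-(1/2) : ℝ)) 3, ← Real.rpow_mul ha]
    norm_num
  have hs5 : A (x, τ) ^ (-(5/2) : ℝ) = (A (x, τ) ^ (-(1/2) : ℝ)) ^ (5 : ℕ) := by
    rw [← Real.rpow_natCast (A (x, τ) ^ (-(1/2) : ℝ)) 5, ← Real.rpow_mul ha]
    norm_num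
  have hs7 : A (x, τ) ^ (-(7/2) : ℝ) = (A (x, τ) ^ (-(1/2) : ℝ)) ^ (7 : ℕ) := by
    rw [← Real.rpow_natCast (A (x, τ) ^ (-(1/2) : ℝ)) 7, ← Real.rpow_mul ha]
    norm_num
  rw [hs3, hs5, hs7]
  ring
end

section
/- Let w : ℝ × ℝ → ℝ be smooth, strictly positive, and 2π-periodic in x, satisfying the evolution equation w_τ = ∂_x²(w_x·w^{−3/2}) (the equation induced on w = u_{xx} by the dispersive flow u_τ = u_{xxx}(u_{xx})^{−3/2}). Then the functional γ₋₁ = ∫₀^{2π} √(w(x,τ)) dx is independent of τ. -/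
open Real intervalIntegral

lemma periodic_deriv' {f : ℝ → ℝ} {c : ℝ} (hper : Function.Periodic f c) :
    Function.Periodic (deriv f) c := by
  intro x
  have : (fun y => f (y + c)) = f := funext fun y => hper y
  calc deriv f (x + c) = deriv (fun y => f (y + c)) x := (deriv_comp_add_const f c x).symm
  _ = deriv f x := by rw [this]

lemma rpow_contDiff {f : ℝ → ℝ} (hf : ContDiff ℝ (⊤ : ℕ∞) f) (hpos : ∀ x, 0 < f x) (p : ℝ) :
    ContDiff ℝ (⊤ : ℕ∞) (fun x => f x ^ p) := by
  rw [contDiff_iff_contDiffAt]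
  intro x
  exact (Real.contDiffAt_rpow_const_of_ne (ne_of_gt (hpos x))).comp x hf.contDiffAt
lemma rpow_hasDerivAt {f : ℝ → ℝ} (hf : ContDiff ℝ (⊤ : ℕ∞) f) (hpos : ∀ x, 0 < f x)
    (p : ℝ) (x : ℝ) :
    HasDerivAt (fun y => f y ^ p) (p * f x ^ (p - 1) * deriv f x) x := by
  have h1 : HasDerivAt (fun y : ℝ => y ^ p) (p * f x ^ (p - 1)) (f x) :=
    Real.hasDerivAt_rpow_const (Or.inl (ne_of_gt (hpos x)))
  exact h1.comp x ((hf.differentiable (by simp) x).hasDerivAt)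

lemma keyIntegral (f : ℝ → ℝ) (hf : ContDiff ℝ (⊤ : ℕ∞) f) (hpos : ∀ x, 0 < f x)
    (hper : Function.Periodic f (2 * π)) :
    ∫ x in (0:ℝ)..(2 * π),
      deriv (deriv (fun x' => deriv f x' * f x' ^ (-(3 : ℝ) / 2))) x / (2 * Real.sqrt (f x)) = 0 := by
  set F : ℝ → ℝ := fun x' => deriv f x' * f x' ^ (-(3 : ℝ) / 2) with hFdef
  obtain ⟨hfd, hf1⟩ := contDiff_infty_iff_deriv.mp hf
  have hF : ContDiff ℝ (⊤ : ℕ∞) F := hf1.mul (rpow_contDiff hf hpos _)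
  obtain ⟨hFd, hF1⟩ := contDiff_infty_iff_deriv.mp hF
  obtain ⟨hF1d, hF2⟩ := contDiff_infty_iff_deriv.mp hF1
  -- derivative of f ^ (-1/2) is -(1/2) * F
  have hA : ∀ x, HasDerivAt (fun y => f y ^ (-(1 : ℝ) / 2)) (-(1 / 2) * F x) x := by
    intro x
    have := rpow_hasDerivAt hf hpos (-(1 : ℝ) / 2) x
    have he : -(1 : ℝ) / 2 - 1 = -(3 : ℝ) / 2 := by norm_num
    rw [he] at this
    convert this using 1
    simp only [hFdef]; ring
  set H : ℝ → ℝ := fun x => f x ^ (-(1 : ℝ) / 2) * deriv F x + (F x) ^ 2 / 4 with hHdef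
  have hH : ∀ x, HasDerivAt H (f x ^ (-(1 : ℝ) / 2) * deriv (deriv F) x) x := by
    intro x
    have h1 := (hA x).mul ((hF1d x).hasDerivAt)
    have h2 := (((hFd x).hasDerivAt).pow 2).div_const 4
    exact (h1.add h2).congr_deriv (by ring)
  -- periodicity
  have hfper' : Function.Periodic (deriv f) (2 * π) := periodic_deriv' hper
  have hFper : Function.Periodic F (2 * π) := by
    intro x; simp only [hFdef]; rw [hfper' x, hper x]
  have hFper' : Function.Periodic (deriv F) (2 * π) := periodic_deriv' hFper
  have hHper : Function.Periodic H (2 * π) := by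
    intro x; simp only [hHdef]; rw [hper x, hFper x, hFper' x]
  -- integrand identity
  have hid : ∀ x, deriv (deriv F) x / (2 * Real.sqrt (f x))
      = (1 / 2) * (f x ^ (-(1 : ℝ) / 2) * deriv (deriv F) x) := by
    intro x
    rw [Real.sqrt_eq_rpow, show (-(1 : ℝ) / 2) = -(1 / 2) by norm_num,
      Real.rpow_neg (hpos x).le]
    have hne : (f x : ℝ) ^ ((1 : ℝ) / 2) ≠ 0 :=
      ne_of_gt (Real.rpow_pos_of_pos (hpos x) _)
    field_simp
  have hint : IntervalIntegrable (fun x => f x ^ (-(1 : ℝ) / 2) * deriv (deriv F) x)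
      MeasureTheory.volume 0 (2 * π) :=
    (((rpow_contDiff hf hpos _).continuous).mul hF2.continuous).intervalIntegrable _ _
  calc (∫ x in (0:ℝ)..(2 * π), deriv (deriv F) x / (2 * Real.sqrt (f x)))
      = ∫ x in (0:ℝ)..(2 * π), (1 / 2) * (f x ^ (-(1 : ℝ) / 2) * deriv (deriv F) x) := by
        apply intervalIntegral.integral_congr; intro x _; exact hid x
    _ = (1 / 2) * ∫ x in (0:ℝ)..(2 * π), f x ^ (-(1 : ℝ) / 2) * deriv (deriv F) x := by
        rw [intervalIntegral.integral_const_mul]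
    _ = (1 / 2) * (H (2 * π) - H 0) := by
        rw [intervalIntegral.integral_eq_sub_of_hasDerivAt (fun x _ => hH x) hint]
    _ = 0 := by
        have := hHper 0
        rw [zero_add] at this
        rw [this]; ring

/-- Let `w(x,τ)` be smooth, strictly positive and
`2π`-periodic in `x`, satisfying `w_τ = ∂_x²(w_x·w^{−3/2})` (the equation
induced on `w = u_{xx}` by the dispersive flow `u_τ = u_{xxx}(u_{xx})^{−3/2}`).
Then the functional `γ₋₁ = ∫₀^{2π} √(w(x,τ)) dx` is independent of `τ`. -/
theorem dispersive_flow_conservation_gamma_minus_one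
    (w : ℝ → ℝ → ℝ)
    (hw : ContDiff ℝ (⊤ : ℕ∞) (Function.uncurry w))
    (hpos : ∀ x τ, 0 < w x τ)
    (hper : ∀ τ, Function.Periodic (fun x => w x τ) (2 * π))
    (hflow : ∀ x τ,
      deriv (fun τ' => w x τ') τ
        = deriv (deriv (fun x' =>
            deriv (fun y => w y τ) x' * (w x' τ) ^ (-(3 : ℝ) / 2))) x) :
    ∀ τ₁ τ₂,
      (∫ x in (0 : ℝ)..(2 * π), Real.sqrt (w x τ₁))
        = ∫ x in (0 : ℝ)..(2 * π), Real.sqrt (w x τ₂) := by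
  set W := Function.uncurry w with hWdef
  set D : ℝ → ℝ → ℝ := fun x τ => fderiv ℝ W (x, τ) (0, 1) with hDdef
  set Φ : ℝ → ℝ → ℝ := fun τ x => D x τ / (2 * Real.sqrt (w x τ)) with hΦdef
  -- pointwise τ-derivative of w
  have hderτ : ∀ x τ, HasDerivAt (fun τ' => w x τ') (D x τ) τ := by
    intro x τ
    have hline : HasDerivAt (fun t : ℝ => ((x, t) : ℝ × ℝ)) ((0 : ℝ), (1 : ℝ)) τ :=
      HasDerivAt.prodMk (hasDerivAt_const τ x) (hasDerivAt_id τ)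
    have hWd : HasFDerivAt W (fderiv ℝ W (x, τ)) (x, τ) :=
      (hw.differentiable (by simp) (x, τ)).hasFDerivAt
    exact hWd.comp_hasDerivAt τ hline
  -- pointwise τ-derivative of sqrt(w)
  have hsq : ∀ x τ, HasDerivAt (fun τ' => Real.sqrt (w x τ')) (Φ τ x) τ := by
    intro x τ
    have h1 : HasDerivAt Real.sqrt (1 / (2 * Real.sqrt (w x τ))) (w x τ) :=
      Real.hasDerivAt_sqrt (ne_of_gt (hpos x τ))
    have := h1.comp τ (hderτ x τ)
    exact this.congr_deriv (by simp only [hΦdef]; ring)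
  -- the integral of Φ τ vanishes
  have hzero : ∀ τ, (∫ x in (0 : ℝ)..(2 * π), Φ τ x) = 0 := by
    intro τ
    have hf : ContDiff ℝ (⊤ : ℕ∞) (fun x => w x τ) :=
      hw.comp (contDiff_id.prodMk contDiff_const)
    have hD : ∀ x, D x τ
        = deriv (deriv (fun x' => deriv (fun y => w y τ) x' * (w x' τ) ^ (-(3 : ℝ) / 2))) x := by
      intro x
      rw [← (hderτ x τ).deriv]
      exact hflow x τ
    calc (∫ x in (0 : ℝ)..(2 * π), Φ τ x)
        = ∫ x in (0 : ℝ)..(2 * π),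
            deriv (deriv (fun x' => deriv (fun y => w y τ) x' * (w x' τ) ^ (-(3 : ℝ) / 2))) x
              / (2 * Real.sqrt (w x τ)) := by
          apply intervalIntegral.integral_congr
          intro x _
          simp only [hΦdef, hD x]
      _ = 0 := keyIntegral (fun x => w x τ) hf (fun x => hpos x τ) (hper τ)
  -- joint continuity of Φ
  have hΦcont : Continuous (fun p : ℝ × ℝ => Φ p.2 p.1) := by
    have h1 : Continuous fun p : ℝ × ℝ => fderiv ℝ W p ((0 : ℝ), (1 : ℝ)) :=
      (hw.continuous_fderiv (by simp)).clm_apply continuous_const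
    have h2 : Continuous fun p : ℝ × ℝ => 2 * Real.sqrt (w p.1 p.2) :=
      continuous_const.mul (hw.continuous.sqrt)
    exact h1.div h2 (fun p => ne_of_gt (mul_pos two_pos (Real.sqrt_pos.mpr (hpos p.1 p.2))))
  -- derivative of the integral
  have hG : ∀ τ₀, HasDerivAt (fun τ => ∫ x in (0 : ℝ)..(2 * π), Real.sqrt (w x τ)) 0 τ₀ := by
    intro τ₀
    set K : Set (ℝ × ℝ) := Set.uIcc 0 (2 * π) ×ˢ Metric.closedBall τ₀ 1 with hKdef
    have hK : IsCompact K := isCompact_uIcc.prod (isCompact_closedBall τ₀ 1)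
    obtain ⟨C, hC⟩ := hK.exists_bound_of_continuousOn hΦcont.continuousOn
    have main := intervalIntegral.hasDerivAt_integral_of_dominated_loc_of_deriv_le
      (F := fun τ x => Real.sqrt (w x τ)) (F' := fun τ x => Φ τ x)
      (bound := fun _ => C) (μ := MeasureTheory.volume) (a := (0:ℝ)) (b := 2 * π)
      (Metric.ball_mem_nhds τ₀ one_pos)
      (Filter.Eventually.of_forall fun τ =>
        ((hw.continuous.comp (continuous_id.prodMk continuous_const)).sqrt).aestronglyMeasurable)
      ((hw.continuous.comp (continuous_id.prodMk continuous_const)).sqrt.intervalIntegrable _ _)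
      ((hΦcont.comp (continuous_id.prodMk continuous_const)).aestronglyMeasurable)
      (Filter.Eventually.of_forall fun x hx τ hτ => by
        have hxK : ((x, τ) : ℝ × ℝ) ∈ K :=
          ⟨Set.uIoc_subset_uIcc hx, Metric.ball_subset_closedBall hτ⟩
        exact hC (x, τ) hxK)
      (intervalIntegrable_const)
      (Filter.Eventually.of_forall fun x _ τ _ => hsq x τ)
    have h2 := main.2
    rwa [hzero τ₀] at h2
  intro τ₁ τ₂
  exact is_const_of_deriv_eq_zero (fun τ => (hG τ).differentiableAt)
    (fun τ => (hG τ).deriv) τ₁ τ₂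
end

section
/- Let w : ℝ × ℝ → ℝ be smooth, strictly positive, and 2π-periodic in x, satisfying the evolution equation w_τ = ∂_x²(w_x·w^{−3/2}). Then the functional ∫₀^{2π} w^{−5/2}·(w_x)² dx is independent of τ; i.e., γ₁ = (1/8)∫₀^{2π} u_{xx}^{−5/2} u_{xxx}² dx (with w = u_{xx}) is a conservation law of the dispersive flow u_τ = u_{xxx}(u_{xx})^{−3/2}. -/
open Real intervalIntegral Function MeasureTheory

noncomputable def pd1 (F : ℝ × ℝ → ℝ) : ℝ × ℝ → ℝ := fun p => fderiv ℝ F p (1, 0)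
noncomputable def pd2 (F : ℝ × ℝ → ℝ) : ℝ × ℝ → ℝ := fun p => fderiv ℝ F p (0, 1)

lemma contDiff_pd1 {F : ℝ × ℝ → ℝ} (h : ContDiff ℝ (⊤ : ℕ∞) F) :
    ContDiff ℝ (⊤ : ℕ∞) (pd1 F) := (h.fderiv_right (by exact_mod_cast le_top)).clm_apply contDiff_const

lemma contDiff_pd2 {F : ℝ × ℝ → ℝ} (h : ContDiff ℝ (⊤ : ℕ∞) F) :
    ContDiff ℝ (⊤ : ℕ∞) (pd2 F) := (h.fderiv_right (by exact_mod_cast le_top)).clm_apply contDiff_const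

lemma hasDerivAt_sect1 {F : ℝ × ℝ → ℝ} (h : ContDiff ℝ (⊤ : ℕ∞) F) (x τ : ℝ) :
    HasDerivAt (fun y => F (y, τ)) (pd1 F (x, τ)) x := by
  have hF := (h.differentiable (by simp) (x, τ)).hasFDerivAt
  have hl : HasDerivAt (fun y : ℝ => (y, τ)) ((1 : ℝ), (0 : ℝ)) x :=
    (hasDerivAt_id x).prodMk (hasDerivAt_const x τ)
  exact hF.comp_hasDerivAt x hl

lemma hasDerivAt_sect2 {F : ℝ × ℝ → ℝ} (h : ContDiff ℝ (⊤ : ℕ∞) F) (x τ : ℝ) :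
    HasDerivAt (fun s => F (x, s)) (pd2 F (x, τ)) τ := by
  have hF := (h.differentiable (by simp) (x, τ)).hasFDerivAt
  have hl : HasDerivAt (fun s : ℝ => (x, s)) ((0 : ℝ), (1 : ℝ)) τ :=
    (hasDerivAt_const τ x).prodMk (hasDerivAt_id τ)
  exact hF.comp_hasDerivAt τ hl

lemma pd_comm {F : ℝ × ℝ → ℝ} (h : ContDiff ℝ (⊤ : ℕ∞) F) (p : ℝ × ℝ) :
    pd2 (pd1 F) p = pd1 (pd2 F) p := by
  have hd : ∀ q, HasFDerivAt F (fderiv ℝ F q) q :=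
    fun q => (h.differentiable (by simp) q).hasFDerivAt
  have hA' : ContDiff ℝ (⊤ : ℕ∞) (fderiv ℝ F) := h.fderiv_right (by exact_mod_cast le_top)
  have hA : HasFDerivAt (fderiv ℝ F) (fderiv ℝ (fderiv ℝ F) p) p :=
    ((hA'.differentiable (by simp)) p).hasFDerivAt
  have hsym := second_derivative_symmetric hd hA
  have key : ∀ u v : ℝ × ℝ,
      fderiv ℝ (fun q => fderiv ℝ F q u) p v = fderiv ℝ (fderiv ℝ F) p v u := by
    intro u v
    have h1 : HasFDerivAt (fun q => fderiv ℝ F q u)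
        ((ContinuousLinearMap.apply ℝ ℝ u).comp (fderiv ℝ (fderiv ℝ F) p)) p :=
      (ContinuousLinearMap.apply ℝ ℝ u).hasFDerivAt.comp p hA
    rw [h1.fderiv]; rfl
  show fderiv ℝ (fun q => fderiv ℝ F q (1, 0)) p (0, 1)
      = fderiv ℝ (fun q => fderiv ℝ F q (0, 1)) p (1, 0)
  rw [key, key, hsym]

/-- Let `w(x,τ)` be smooth, strictly positive and
`2π`-periodic in `x`, satisfying `w_τ = ∂_x²(w_x·w^{−3/2})`. Then the
functional `∫₀^{2π} w^{−5/2}·(w_x)² dx` is independent of `τ`; i.e.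
`γ₁ = (1/8)∫₀^{2π} u_{xx}^{−5/2} u_{xxx}² dx` (with `w = u_{xx}`) is a
conservation law of the dispersive flow `u_τ = u_{xxx}(u_{xx})^{−3/2}`. -/
theorem dispersive_flow_conservation_gamma_one
    (w : ℝ → ℝ → ℝ)
    (hw : ContDiff ℝ (⊤ : ℕ∞) (Function.uncurry w))
    (hpos : ∀ x τ, 0 < w x τ)
    (hper : ∀ τ, Function.Periodic (fun x => w x τ) (2 * π))
    (hflow : ∀ x τ,
      deriv (fun τ' => w x τ') τ
        = deriv (deriv (fun x' =>
            deriv (fun y => w y τ) x' * (w x' τ) ^ (-(3 : ℝ) / 2))) x) :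
    ∀ τ₁ τ₂,
      (∫ x in (0 : ℝ)..(2 * π), (w x τ₁) ^ (-(5 : ℝ) / 2) * (deriv (fun y => w y τ₁) x) ^ 2)
        = ∫ x in (0 : ℝ)..(2 * π), (w x τ₂) ^ (-(5 : ℝ) / 2) * (deriv (fun y => w y τ₂) x) ^ 2 := by
  intro τ₁ τ₂
  -- partial derivatives
  set W1 := pd1 (Function.uncurry w) with hW1def
  set W2 := pd1 W1 with hW2def
  set W3 := pd1 W2 with hW3def
  set W4 := pd1 W3 with hW4def
  set Wt := pd2 (Function.uncurry w) with hWtdef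
  set M := pd2 W1 with hMdef
  have hW1s : ContDiff ℝ (⊤ : ℕ∞) W1 := contDiff_pd1 hw
  have hW2s : ContDiff ℝ (⊤ : ℕ∞) W2 := contDiff_pd1 hW1s
  have hW3s : ContDiff ℝ (⊤ : ℕ∞) W3 := contDiff_pd1 hW2s
  have hW4s : ContDiff ℝ (⊤ : ℕ∞) W4 := contDiff_pd1 hW3s
  have hWts : ContDiff ℝ (⊤ : ℕ∞) Wt := contDiff_pd2 hw
  have hc0 : ∀ x τ, HasDerivAt (fun y => w y τ) (W1 (x, τ)) x :=
    fun x τ => hasDerivAt_sect1 hw x τ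
  have hc1 : ∀ x τ, HasDerivAt (fun y => W1 (y, τ)) (W2 (x, τ)) x :=
    fun x τ => hasDerivAt_sect1 hW1s x τ
  have hc2 : ∀ x τ, HasDerivAt (fun y => W2 (y, τ)) (W3 (x, τ)) x :=
    fun x τ => hasDerivAt_sect1 hW2s x τ
  have hc3 : ∀ x τ, HasDerivAt (fun y => W3 (y, τ)) (W4 (x, τ)) x :=
    fun x τ => hasDerivAt_sect1 hW3s x τ
  have hct : ∀ x τ, HasDerivAt (fun s => w x s) (Wt (x, τ)) τ :=
    fun x τ => hasDerivAt_sect2 hw x τ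
  have hctW1 : ∀ x τ, HasDerivAt (fun s => W1 (x, s)) (M (x, τ)) τ :=
    fun x τ => hasDerivAt_sect2 hW1s x τ
  -- T = w^{-1/2}
  set T : ℝ × ℝ → ℝ := fun p => w p.1 p.2 ^ (-(1 : ℝ)/2) with hTdef
  have hpow : ∀ (x τ : ℝ) (n : ℕ) (r : ℝ), r = (-(1 : ℝ)/2) * n →
      (w x τ) ^ r = T (x, τ) ^ n := by
    intro x τ n r hr
    rw [hTdef, hr, Real.rpow_mul (hpos x τ).le, Real.rpow_natCast]
  have hTm1 : ∀ x τ : ℝ, w x τ ^ (-(1 : ℝ)/2 - 1) = T (x, τ) ^ 3 :=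
    fun x τ => hpow x τ 3 _ (by norm_num)
  have hT3 : ∀ x τ : ℝ, w x τ ^ (-(3 : ℝ)/2) = T (x, τ) ^ 3 :=
    fun x τ => hpow x τ 3 _ (by norm_num)
  have hT5 : ∀ x τ : ℝ, w x τ ^ (-(5 : ℝ)/2) = T (x, τ) ^ 5 :=
    fun x τ => hpow x τ 5 _ (by norm_num)
  have hdTx : ∀ x τ, HasDerivAt (fun y => T (y, τ))
      (-(1/2) * W1 (x, τ) * T (x, τ) ^ 3) x := by
    intro x τ
    have h := (hc0 x τ).rpow_const (p := -(1 : ℝ)/2) (Or.inl (hpos x τ).ne')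
    simp only [hTdef]
    convert h using 1
    rw [hTm1 x τ]; ring
  have hdTt : ∀ x τ, HasDerivAt (fun s => T (x, s))
      (-(1/2) * Wt (x, τ) * T (x, τ) ^ 3) τ := by
    intro x τ
    have h := (hct x τ).rpow_const (p := -(1 : ℝ)/2) (Or.inl (hpos x τ).ne')
    simp only [hTdef]
    convert h using 1
    rw [hTm1 x τ]; ring
  -- dispersive quantities
  set V1 : ℝ × ℝ → ℝ := fun p => W2 p * T p ^ 3 - 3/2 * W1 p ^ 2 * T p ^ 5 with hV1def
  set V2 : ℝ × ℝ → ℝ := fun p =>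
    W3 p * T p ^ 3 - 9/2 * W1 p * W2 p * T p ^ 5 + 15/4 * W1 p ^ 3 * T p ^ 7 with hV2def
  set V3 : ℝ × ℝ → ℝ := fun p =>
    W4 p * T p ^ 3 - 6 * W1 p * W3 p * T p ^ 5 - 9/2 * W2 p ^ 2 * T p ^ 5
      + 45/2 * W1 p ^ 2 * W2 p * T p ^ 7 - 105/8 * W1 p ^ 4 * T p ^ 9 with hV3def
  have hdv : ∀ x τ, HasDerivAt (fun y => W1 (y, τ) * T (y, τ) ^ 3) (V1 (x, τ)) x := by
    intro x τ
    have h := (hc1 x τ).fun_mul ((hdTx x τ).fun_pow 3)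
    convert h using 1 <;> try rfl
    simp only [hV1def]; push_cast; ring
  have hdv1 : ∀ x τ, HasDerivAt (fun y => V1 (y, τ)) (V2 (x, τ)) x := by
    intro x τ
    have h := ((hc2 x τ).fun_mul ((hdTx x τ).fun_pow 3)).fun_sub
      ((((hc1 x τ).fun_pow 2).const_mul (3/2 : ℝ)).fun_mul ((hdTx x τ).fun_pow 5))
    simp only [hV1def]
    convert h using 1 <;> try rfl
    simp only [hV2def]; push_cast; ring
  have hdv2 : ∀ x τ, HasDerivAt (fun y => V2 (y, τ)) (V3 (x, τ)) x := by
    intro x τ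
    have h := (((hc3 x τ).fun_mul ((hdTx x τ).fun_pow 3)).fun_sub
      ((((hc1 x τ).const_mul (9/2 : ℝ)).fun_mul (hc2 x τ)).fun_mul ((hdTx x τ).fun_pow 5))).fun_add
      ((((hc1 x τ).fun_pow 3).const_mul (15/4 : ℝ)).fun_mul ((hdTx x τ).fun_pow 7))
    simp only [hV2def]
    convert h using 1 <;> try rfl
    simp only [hV3def]; push_cast; ring
  -- the flow in the new variables
  have hWtV2 : ∀ x τ, Wt (x, τ) = V2 (x, τ) := by
    intro x τ
    have hinner : (fun x' => deriv (fun y => w y τ) x' * (w x' τ) ^ (-(3 : ℝ)/2))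
        = fun x' => W1 (x', τ) * T (x', τ) ^ 3 :=
      funext fun x' => by rw [(hc0 x' τ).deriv, hT3 x' τ]
    have h2 : deriv (fun x' => W1 (x', τ) * T (x', τ) ^ 3) = fun x' => V1 (x', τ) :=
      funext fun x' => (hdv x' τ).deriv
    calc Wt (x, τ) = deriv (fun s => w x s) τ := ((hct x τ).deriv).symm
      _ = deriv (deriv (fun x' =>
            deriv (fun y => w y τ) x' * (w x' τ) ^ (-(3 : ℝ)/2))) x := hflow x τ
      _ = V2 (x, τ) := by rw [hinner, h2]; exact (hdv1 x τ).deriv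
  have hMV3 : ∀ x τ, M (x, τ) = V3 (x, τ) := by
    intro x τ
    have h1 : M (x, τ) = pd1 Wt (x, τ) := pd_comm hw (x, τ)
    have h2 : HasDerivAt (fun y => Wt (y, τ)) (pd1 Wt (x, τ)) x := hasDerivAt_sect1 hWts x τ
    have h3 : (fun y => Wt (y, τ)) = fun y => V2 (y, τ) := funext fun y => hWtV2 y τ
    rw [h3] at h2
    exact h1.trans (h2.unique (hdv2 x τ))
  -- the density and its τ-derivative
  set g : ℝ × ℝ → ℝ := fun p => T p ^ 5 * W1 p ^ 2 with hgdef
  set gt : ℝ × ℝ → ℝ := fun p =>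
    -(5/2) * V2 p * W1 p ^ 2 * T p ^ 7 + 2 * W1 p * V3 p * T p ^ 5 with hgtdef
  have hgint : ∀ τ : ℝ, (fun x => (w x τ) ^ (-(5 : ℝ)/2) * (deriv (fun y => w y τ) x) ^ 2)
      = fun x => g (x, τ) :=
    fun τ => funext fun x => by rw [hT5 x τ, (hc0 x τ).deriv, hgdef]
  have hgt : ∀ x τ, HasDerivAt (fun s => g (x, s)) (gt (x, τ)) τ := by
    intro x τ
    have hW1τ : HasDerivAt (fun s => W1 (x, s)) (V3 (x, τ)) τ := hMV3 x τ ▸ hctW1 x τ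
    have h := ((hdTt x τ).fun_pow 5).fun_mul (hW1τ.fun_pow 2)
    simp only [hgdef]
    convert h using 1 <;> try rfl
    simp only [hgtdef]
    rw [hWtV2 x τ]; push_cast; ring
  -- the exact x-derivative H
  set H : ℝ × ℝ → ℝ := fun p =>
    95/16 * T p ^ 12 * W1 p ^ 4 - 13/2 * T p ^ 10 * W1 p ^ 2 * W2 p
      - T p ^ 8 * W2 p ^ 2 + 2 * T p ^ 8 * W1 p * W3 p with hHdef
  have hHx : ∀ x τ, HasDerivAt (fun y => H (y, τ)) (gt (x, τ)) x := by
    intro x τ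
    have h := (((((hdTx x τ).fun_pow 12).const_mul (95/16 : ℝ)).fun_mul ((hc1 x τ).fun_pow 4)).fun_sub
        (((((hdTx x τ).fun_pow 10).const_mul (13/2 : ℝ)).fun_mul ((hc1 x τ).fun_pow 2)).fun_mul (hc2 x τ))
       |>.fun_sub (((hdTx x τ).fun_pow 8).fun_mul ((hc2 x τ).fun_pow 2))).fun_add
        (((((hdTx x τ).fun_pow 8).const_mul (2 : ℝ)).fun_mul (hc1 x τ)).fun_mul (hc3 x τ))
    simp only [hHdef]
    convert h using 1 <;> try rfl
    simp only [hgtdef, hV2def, hV3def]; push_cast; ring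
  -- continuity
  have hTc : Continuous T := by
    rw [hTdef]
    exact hw.continuous.rpow_const (fun p => Or.inl (hpos p.1 p.2).ne')
  have hW1c : Continuous W1 := hW1s.continuous
  have hW2c : Continuous W2 := hW2s.continuous
  have hW3c : Continuous W3 := hW3s.continuous
  have hW4c : Continuous W4 := hW4s.continuous
  have hgtc : Continuous gt := by
    simp only [hgtdef, hV2def, hV3def]; fun_prop
  have hgc : Continuous g := by
    simp only [hgdef]; fun_prop
  -- periodicity
  have hstep : ∀ F : ℝ × ℝ → ℝ, ContDiff ℝ (⊤ : ℕ∞) F →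
      (∀ τ x, F (x + 2*π, τ) = F (x, τ)) →
      ∀ τ x, pd1 F (x + 2*π, τ) = pd1 F (x, τ) := by
    intro F hF hFp τ x
    have h1 := hasDerivAt_sect1 hF (x + 2*π) τ
    have h2 : HasDerivAt ((fun y => F (y, τ)) ∘ (fun y => y + 2*π))
        (pd1 F (x + 2*π, τ) * 1) x :=
      h1.comp x ((hasDerivAt_id x).add_const (2*π))
    have h3 : ((fun y => F (y, τ)) ∘ (fun y => y + 2*π)) = fun y => F (y, τ) :=
      funext fun y => hFp τ y
    rw [h3, mul_one] at h2
    exact h2.unique (hasDerivAt_sect1 hF x τ)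
  have hpW1 : ∀ τ x, W1 (x + 2*π, τ) = W1 (x, τ) :=
    hstep _ hw (fun τ x => hper τ x)
  have hpW2 : ∀ τ x, W2 (x + 2*π, τ) = W2 (x, τ) := hstep _ hW1s hpW1
  have hpW3 : ∀ τ x, W3 (x + 2*π, τ) = W3 (x, τ) := hstep _ hW2s hpW2
  have hpT : ∀ τ x, T (x + 2*π, τ) = T (x, τ) := by
    intro τ x
    simp only [hTdef]
    rw [show w (x + 2*π) τ = w x τ from hper τ x]
  have hHper : ∀ τ : ℝ, H (2*π, τ) = H (0, τ) := by
    intro τ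
    have h0 : (0:ℝ) + 2*π = 2*π := zero_add _
    simp only [hHdef]
    rw [← h0, hpT, hpW1, hpW2, hpW3]
  have h2π : (0:ℝ) ≤ 2*π := by positivity
  have hzero : ∀ s : ℝ, (∫ x in (0:ℝ)..(2*π), gt (x, s)) = 0 := by
    intro s
    have hint : IntervalIntegrable (fun x => gt (x, s)) volume 0 (2*π) :=
      (hgtc.comp (continuous_id.prodMk continuous_const)).intervalIntegrable _ _
    rw [intervalIntegral.integral_eq_sub_of_hasDerivAt (fun x _ => hHx x s) hint,
      hHper s, sub_self]
  have key : ∀ a b : ℝ, a ≤ b →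
      (∫ x in (0:ℝ)..(2*π), g (x, a)) = ∫ x in (0:ℝ)..(2*π), g (x, b) := by
    intro a b hab
    have hga : IntervalIntegrable (fun x => g (x, a)) volume 0 (2*π) :=
      (hgc.comp (continuous_id.prodMk continuous_const)).intervalIntegrable _ _
    have hgb : IntervalIntegrable (fun x => g (x, b)) volume 0 (2*π) :=
      (hgc.comp (continuous_id.prodMk continuous_const)).intervalIntegrable _ _
    have hFTC : ∀ x : ℝ, (∫ s in a..b, gt (x, s)) = g (x, b) - g (x, a) := fun x =>
      intervalIntegral.integral_eq_sub_of_hasDerivAt (fun s _ => hgt x s)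
        ((hgtc.comp (continuous_const.prodMk continuous_id)).intervalIntegrable _ _)
    have hint2 : Integrable (Function.uncurry fun x s => gt (x, s))
        ((volume.restrict (Set.Ioc 0 (2*π))).prod (volume.restrict (Set.Ioc a b))) := by
      rw [MeasureTheory.Measure.prod_restrict]
      have hic : IntegrableOn gt ((Set.Icc (0:ℝ) (2*π)) ×ˢ (Set.Icc a b))
          (volume.prod volume) :=
        hgtc.continuousOn.integrableOn_compact (isCompact_Icc.prod isCompact_Icc)
      exact hic.mono_set (Set.prod_mono Set.Ioc_subset_Icc_self Set.Ioc_subset_Icc_self)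
    calc (∫ x in (0:ℝ)..(2*π), g (x, a))
        = (∫ x in (0:ℝ)..(2*π), g (x, b))
            - ∫ x in (0:ℝ)..(2*π), (g (x, b) - g (x, a)) := by
          rw [intervalIntegral.integral_sub hgb hga]; ring
      _ = (∫ x in (0:ℝ)..(2*π), g (x, b))
            - ∫ x in (0:ℝ)..(2*π), ∫ s in a..b, gt (x, s) := by
          congr 1
          exact intervalIntegral.integral_congr (fun x _ => (hFTC x).symm)
      _ = (∫ x in (0:ℝ)..(2*π), g (x, b))
            - ∫ s in a..b, ∫ x in (0:ℝ)..(2*π), gt (x, s) := by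
          congr 1
          simp_rw [intervalIntegral.integral_of_le hab, intervalIntegral.integral_of_le h2π]
          exact MeasureTheory.integral_integral_swap hint2
      _ = ∫ x in (0:ℝ)..(2*π), g (x, b) := by
          simp_rw [hzero]; simp
  rcases le_total τ₁ τ₂ with h | h
  · rw [hgint τ₁, hgint τ₂]; exact key τ₁ τ₂ h
  · rw [hgint τ₁, hgint τ₂]; exact (key τ₂ τ₁ h).symm
end

section
/- Let c, a, k be real constants. On the open set of points (x,t) ∈ ℝ² where a(x − 2ct) + k > 0, the function u(x,t) := −c + (a(x − 2ct) + k)^{2/3} satisfies the Whitham-type equation in local form u_{xt} = 2(u u_x)_x − u_x². This is the exact one-parametric solution q(x,t) = −c_η + [ (3/2)√(h̄)(x − 2c_η t) + k̄ ]^{2/3} obtained from the two-dimensional invariant reduction. -/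
open Real Filter Topology

-- inner spatial derivative
lemma dx_aux (c a k : ℝ) (t x : ℝ) (h : 0 < a * (x - 2 * c * t) + k) :
    HasDerivAt (fun x' => -c + (a * (x' - 2 * c * t) + k) ^ ((2:ℝ)/3))
      (2/3 * a * (a * (x - 2 * c * t) + k) ^ (-(1:ℝ)/3)) x := by
  have hs : HasDerivAt (fun x' => a * (x' - 2 * c * t) + k) a x := by
    simpa using (((hasDerivAt_id x).sub_const (2*c*t)).const_mul a).add_const k
  have := (hs.rpow_const (p := (2:ℝ)/3) (Or.inl h.ne')).const_add (-c)
  rw [show (2:ℝ)/3 - 1 = -(1:ℝ)/3 by norm_num] at this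
  convert this using 1
  all_goals first | rfl | ring

lemma dx_deriv (c a k : ℝ) (t x : ℝ) (h : 0 < a * (x - 2 * c * t) + k) :
    deriv (fun x' => -c + (a * (x' - 2 * c * t) + k) ^ ((2:ℝ)/3)) x
      = 2/3 * a * (a * (x - 2 * c * t) + k) ^ (-(1:ℝ)/3) :=
  (dx_aux c a k t x h).deriv

/-- For real constants `c, a, k`, on the open set of points
`(x,t)` where `a(x − 2ct) + k > 0`, the function
`u(x,t) := −c + (a(x − 2ct) + k)^{2/3}` satisfies the Whitham-type equation in
local form `u_{xt} = 2(u u_x)_x − u_x²`. This is the exact one-parametric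
solution obtained from the two-dimensional invariant reduction. -/
theorem whitham_exact_travelling_solution
    (c a k : ℝ) (u : ℝ → ℝ → ℝ)
    (hudef : ∀ x t, u x t = -c + (a * (x - 2 * c * t) + k) ^ ((2 : ℝ) / 3)) :
    ∀ x t, 0 < a * (x - 2 * c * t) + k →
      deriv (fun t' => deriv (fun x' => u x' t') x) t
        = deriv (fun x' => 2 * (u x' t * deriv (fun y => u y t) x')) x
          - (deriv (fun x' => u x' t) x) ^ 2 := by
  intro x t h
  simp only [hudef]
  set s := a * (x - 2 * c * t) + k with hs_def
  -- LHS: time derivative of the x-derivative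
  have hcont : Continuous (fun t' : ℝ => a * (x - 2 * c * t') + k) := by continuity
  have hopen : ∀ᶠ t' in 𝓝 t, 0 < a * (x - 2 * c * t') + k :=
    (hcont.continuousAt (x := t)).eventually (eventually_gt_nhds h)
  have heq : (fun t' => deriv (fun x' => -c + (a * (x' - 2 * c * t') + k) ^ ((2:ℝ)/3)) x)
      =ᶠ[𝓝 t] (fun t' => 2/3 * a * (a * (x - 2 * c * t') + k) ^ (-(1:ℝ)/3)) :=
    hopen.mono fun t' ht' => dx_deriv c a k t' x ht'
  have hst : HasDerivAt (fun t' => a * (x - 2 * c * t') + k) (a * (-(2*c))) t := by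
    simpa using (((hasDerivAt_id t).const_mul (2*c)).const_sub x).const_mul a |>.add_const k
  have hg : HasDerivAt (fun t' => 2/3 * a * (a * (x - 2 * c * t') + k) ^ (-(1:ℝ)/3))
      (2/3 * a * (a * (-(2*c)) * (-(1:ℝ)/3) * s ^ (-(1:ℝ)/3 - 1))) t :=
    (hst.rpow_const (Or.inl h.ne')).const_mul (2/3 * a)
  rw [heq.deriv_eq, hg.deriv]
  -- RHS: spatial derivative
  have hcontx : Continuous (fun x' : ℝ => a * (x' - 2 * c * t) + k) := by continuity
  have hopenx : ∀ᶠ x' in 𝓝 x, 0 < a * (x' - 2 * c * t) + k :=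
    (hcontx.continuousAt (x := x)).eventually (eventually_gt_nhds h)
  have heqx : (fun x' => 2 * ((-c + (a * (x' - 2 * c * t) + k) ^ ((2:ℝ)/3)) *
        deriv (fun y => -c + (a * (y - 2 * c * t) + k) ^ ((2:ℝ)/3)) x'))
      =ᶠ[𝓝 x] (fun x' => 2 * ((-c + (a * (x' - 2 * c * t) + k) ^ ((2:ℝ)/3)) *
        (2/3 * a * (a * (x' - 2 * c * t) + k) ^ (-(1:ℝ)/3)))) :=
    hopenx.mono fun x' hx' => by simp only [dx_deriv c a k t x' hx']
  have hsx : HasDerivAt (fun x' => a * (x' - 2 * c * t) + k) a x := by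
    simpa using (((hasDerivAt_id x).sub_const (2*c*t)).const_mul a).add_const k
  have h1 := dx_aux c a k t x h
  have h2 : HasDerivAt (fun x' => 2/3 * a * (a * (x' - 2 * c * t) + k) ^ (-(1:ℝ)/3))
      (2/3 * a * (a * (-(1:ℝ)/3) * s ^ (-(1:ℝ)/3 - 1))) x :=
    (hsx.rpow_const (Or.inl h.ne')).const_mul (2/3 * a)
  have hrhs := (h1.mul h2).const_mul 2
  simp only [Pi.mul_apply] at hrhs
  rw [heqx.deriv_eq, hrhs.deriv, dx_deriv c a k t x h]
  -- algebra with rpow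
  have e1 : s ^ (-(1:ℝ)/3) * s ^ (-(1:ℝ)/3) = s ^ (-(2:ℝ)/3) := by
    rw [← Real.rpow_add h]; norm_num
  have e2 : s ^ ((2:ℝ)/3) * s ^ (-(1:ℝ)/3 - 1) = s ^ (-(2:ℝ)/3) := by
    rw [← Real.rpow_add h]; norm_num
  rw [← hs_def]
  linear_combination (4/9*a^2) * e2 - (4/9*a^2) * e1
end

section
/- Let c_θ, c_η ∈ ℝ and let u : I → ℝ be a four times continuously differentiable function on an interval I with u″(x) > 0 for all x ∈ I, satisfying the stationary equation of the four-dimensional invariant reduction: (½ (u″)^{−1/2})″ + c_θ((u′)² − 2(u·u′)′) − 2c_η·u″ = 0. Then the energy-type quantity E(x) := c_θ·u·(u′)² + c_η·(u′)² − u′·(½ (u″)^{−1/2})′ − ½√(u″) is constant on I; i.e., E is a first integral of the x-flow on the four-dimensional invariant submanifold M⁴. -/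
open Real

/-- Let `c_θ, c_η ∈ ℝ` and let `u` be four times continuously
differentiable on an interval `(a,b)` with `u″ > 0`, satisfying the stationary
equation of the four-dimensional invariant reduction
`(½(u″)^{−1/2})″ + c_θ((u′)² − 2(u u′)′) − 2c_η u″ = 0`. Then the energy-type
quantity `E = c_θ u (u′)² + c_η (u′)² − u′·(½(u″)^{−1/2})′ − ½√(u″)` is
constant on the interval: it is a first integral of the `x`-flow on the
four-dimensional invariant submanifold `M⁴`. -/
theorem four_dimensional_reduction_energy_integral
    (cθ cη a b : ℝ) (u : ℝ → ℝ)
    (hu : ContDiffOn ℝ 4 u (Set.Ioo a b))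
    (hpos : ∀ x ∈ Set.Ioo a b, 0 < deriv (deriv u) x)
    (heq : ∀ x ∈ Set.Ioo a b,
      deriv (deriv (fun y => (1 / 2) * (1 / Real.sqrt (deriv (deriv u) y)))) x
        + cθ * ((deriv u x) ^ 2 - 2 * deriv (fun y => u y * deriv u y) x)
        - 2 * cη * deriv (deriv u) x = 0) :
    ∀ x ∈ Set.Ioo a b, ∀ y ∈ Set.Ioo a b,
      cθ * u x * (deriv u x) ^ 2 + cη * (deriv u x) ^ 2
        - deriv u x * deriv (fun z => (1 / 2) * (1 / Real.sqrt (deriv (deriv u) z))) x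
        - (1 / 2) * Real.sqrt (deriv (deriv u) x)
      = cθ * u y * (deriv u y) ^ 2 + cη * (deriv u y) ^ 2
        - deriv u y * deriv (fun z => (1 / 2) * (1 / Real.sqrt (deriv (deriv u) z))) y
        - (1 / 2) * Real.sqrt (deriv (deriv u) y) := by
  have hso : IsOpen (Set.Ioo a b) := isOpen_Ioo
  set s := Set.Ioo a b with hsdef
  set g : ℝ → ℝ := fun y => (1 / 2) * (1 / Real.sqrt (deriv (deriv u) y)) with hgdef
  have h1 : ContDiffOn ℝ 3 (deriv u) s := hu.deriv_of_isOpen hso (by norm_num)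
  have h2 : ContDiffOn ℝ 2 (deriv (deriv u)) s := h1.deriv_of_isOpen hso (by norm_num)
  have hg2 : ContDiffOn ℝ 2 g s := by
    intro x hx
    have hw : ContDiffAt ℝ 2 (deriv (deriv u)) x := h2.contDiffAt (hso.mem_nhds hx)
    have hW := hpos x hx
    have hsq : ContDiffAt ℝ 2 (fun y => Real.sqrt (deriv (deriv u) y)) x :=
      (contDiffAt_sqrt hW.ne').comp x hw
    have : ContDiffAt ℝ 2 g x := by
      simp only [hgdef, one_div]
      exact contDiffAt_const.mul (hsq.inv (Real.sqrt_pos.mpr hW).ne')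
    exact this.contDiffWithinAt
  have hg1 : ContDiffOn ℝ 1 (deriv g) s := hg2.deriv_of_isOpen hso (by norm_num)
  -- E has zero derivative at each point of s
  set E : ℝ → ℝ := fun z => cθ * u z * (deriv u z) ^ 2 + cη * (deriv u z) ^ 2
      - deriv u z * deriv g z - (1 / 2) * Real.sqrt (deriv (deriv u) z) with hEdef
  have key : ∀ x ∈ s, HasDerivAt E 0 x := by
    intro x hx
    have hW := hpos x hx
    have hsW : (0:ℝ) < Real.sqrt (deriv (deriv u) x) := Real.sqrt_pos.mpr hW
    set W := deriv (deriv u) x with hWdef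
    set W3 := deriv (deriv (deriv u)) x with hW3def
    have hu1 : HasDerivAt u (deriv u x) x :=
      ((hu.differentiableOn (by norm_num)).differentiableAt (hso.mem_nhds hx)).hasDerivAt
    have hv : HasDerivAt (deriv u) W x :=
      ((h1.differentiableOn (by norm_num)).differentiableAt (hso.mem_nhds hx)).hasDerivAt
    have hw : HasDerivAt (deriv (deriv u)) W3 x :=
      ((h2.differentiableOn (by norm_num)).differentiableAt (hso.mem_nhds hx)).hasDerivAt
    have hsqrt : HasDerivAt (fun y => Real.sqrt (deriv (deriv u) y))
        (1 / (2 * Real.sqrt W) * W3) x := by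
      have h := (Real.hasDerivAt_sqrt hW.ne').comp x hw
      exact h
    have hg' : HasDerivAt g
        ((1 / 2) * (-(1 / (2 * Real.sqrt W) * W3) / (Real.sqrt W) ^ 2)) x := by
      have h := HasDerivAt.const_mul (1/2 : ℝ) (hsqrt.inv hsW.ne')
      simp only [one_div] at h
      simp only [hgdef, one_div]
      exact h
    have hdg : deriv g x = (1 / 2) * (-(1 / (2 * Real.sqrt W) * W3) / (Real.sqrt W) ^ 2) :=
      hg'.deriv
    have hg'' : HasDerivAt (deriv g) (deriv (deriv g) x) x :=
      ((hg1.differentiableOn (by norm_num)).differentiableAt (hso.mem_nhds hx)).hasDerivAt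
    have hmul : deriv (fun y => u y * deriv u y) x = deriv u x * deriv u x + u x * W :=
      (hu1.mul hv).deriv
    have hG2 : deriv (deriv g) x = cθ * ((deriv u x) ^ 2 + 2 * u x * W) + 2 * cη * W := by
      have h := heq x hx
      rw [hmul] at h
      nlinarith [h]
    have t1 : HasDerivAt (fun z => cθ * u z * (deriv u z) ^ 2)
        ((cθ * deriv u x) * (deriv u x) ^ 2 + (cθ * u x) * (2 * deriv u x ^ 1 * W)) x :=
      (hu1.const_mul cθ).mul (hv.pow 2)
    have t2 : HasDerivAt (fun z => cη * (deriv u z) ^ 2) (cη * (2 * deriv u x ^ 1 * W)) x :=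
      HasDerivAt.const_mul cη (hv.pow 2)
    have t3 : HasDerivAt (fun z => deriv u z * deriv g z)
        (W * deriv g x + deriv u x * deriv (deriv g) x) x := hv.mul hg''
    have t4 : HasDerivAt (fun z => (1 / 2) * Real.sqrt (deriv (deriv u) z))
        ((1 / 2) * (1 / (2 * Real.sqrt W) * W3)) x := HasDerivAt.const_mul _ hsqrt
    have hE : HasDerivAt E
        (((cθ * deriv u x) * (deriv u x) ^ 2 + (cθ * u x) * (2 * deriv u x ^ 1 * W)
          + cη * (2 * deriv u x ^ 1 * W))
          - (W * deriv g x + deriv u x * deriv (deriv g) x)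
          - (1 / 2) * (1 / (2 * Real.sqrt W) * W3)) x := ((t1.add t2).sub t3).sub t4
    have hzero : ((cθ * deriv u x) * (deriv u x) ^ 2 + (cθ * u x) * (2 * deriv u x ^ 1 * W)
          + cη * (2 * deriv u x ^ 1 * W))
          - (W * deriv g x + deriv u x * deriv (deriv g) x)
          - (1 / 2) * (1 / (2 * Real.sqrt W) * W3) = 0 := by
      rw [hdg, hG2, Real.sq_sqrt hW.le]
      field_simp
      ring
    rw [hzero] at hE
    exact hE
  intro x hx y hy
  have hdiff : DifferentiableOn ℝ E s := fun z hz =>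
    ((key z hz).differentiableAt).differentiableWithinAt
  have hfd : ∀ z ∈ s, fderivWithin ℝ E s z = 0 := by
    intro z hz
    have h0 : HasFDerivAt E (0 : ℝ →L[ℝ] ℝ) z := by
      have h := (key z hz).hasFDerivAt
      simpa using h
    rw [fderivWithin_eq_fderiv (hso.uniqueDiffOn z hz) (key z hz).differentiableAt, h0.fderiv]
  exact (convex_Ioo a b).is_const_of_fderivWithin_eq_zero hdiff hfd hx hy
end
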